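/- arXiv:1408.4866 — 4 statements merged into one kernel-verified Lean document; each statement's English description precedes it below -/
import Mathlib

section
/- For r ≥ 2 and each j ∈ {1, ..., r-1}, X_{r,j,n} - Y_{r,j,n} = c_{r,n}, where X_{r,j,n} is the total number of parts congruent to j mod r over all r-class regular partitions of n, Y_{r,j,n} is the total number of part-sizes with multiplicity ≥ j over all r-regular partitions of n, and c_{r,n} is independent of j with generating function Φ_r(q)·Σ_{k≥1} q^{rk}/(1-q^{rk}). -/
open Nat Finset PowerSeries
open scoped Classical
namespace Aux
noncomputable section
variable {α : Type*}

def indicatorSeries (α : Type*) [Semiring α] (s : Set ℕ) : PowerSeries α :=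
  PowerSeries.mk fun n => if n ∈ s then 1 else 0

theorem coeff_indicator (s : Set ℕ) [Semiring α] (n : ℕ) :
    coeff (R := α) n (indicatorSeries _ s) = if n ∈ s then 1 else 0 :=
  coeff_mk _ _

theorem coeff_indicator_pos (s : Set ℕ) [Semiring α] (n : ℕ) (h : n ∈ s) :
    coeff (R := α) n (indicatorSeries _ s) = 1 := by rw [coeff_indicator, if_pos h]

theorem coeff_indicator_neg (s : Set ℕ) [Semiring α] (n : ℕ) (h : n ∉ s) :
    coeff (R := α) n (indicatorSeries _ s) = 0 := by rw [coeff_indicator, if_neg h]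

theorem constantCoeff_indicator (s : Set ℕ) [Semiring α] :
    constantCoeff (R := α) (indicatorSeries _ s) = if 0 ∈ s then 1 else 0 :=
  rfl

theorem two_series (i : ℕ) [Semiring α] :
    1 + (X : PowerSeries α) ^ i.succ = indicatorSeries α {0, i.succ} := by
  ext n
  simp only [coeff_indicator, coeff_one, coeff_X_pow, Set.mem_insert_iff, Set.mem_singleton_iff,
    map_add]
  cases' n with d
  · simp [(Nat.succ_ne_zero i).symm]
  · simp [Nat.succ_ne_zero d]

theorem num_series' [Field α] (i : ℕ) :
    (1 - (X : PowerSeries α) ^ (i + 1))⁻¹ = indicatorSeries α {k | i + 1 ∣ k} := by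
  rw [PowerSeries.inv_eq_iff_mul_eq_one]
  · ext n
    cases n with
    | zero => simp [mul_sub, zero_pow, constantCoeff_indicator]
    | succ n =>
      simp only [coeff_one, if_false, mul_sub, mul_one, coeff_indicator,
        LinearMap.map_sub, reduceCtorEq]
      simp_rw [coeff_mul, coeff_X_pow, coeff_indicator, @boole_mul _ _ _ _]
      simp only [Set.mem_setOf_eq]; erw [sum_ite, sum_ite]
      simp_rw [@filter_filter _ _ _ _ _, sum_const_zero, add_zero, sum_const, nsmul_eq_mul, mul_one,
        sub_eq_iff_eq_add, zero_add]
      symm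
      split_ifs with h
      · suffices #{a ∈ antidiagonal (n + 1) | i + 1 ∣ a.fst ∧ a.snd = i + 1} = 1 by
          convert congr_arg ((↑) : ℕ → α) this; norm_cast
        rw [Finset.card_eq_one]
        cases' h with p hp
        refine ⟨((i + 1) * (p - 1), i + 1), ?_⟩
        ext ⟨a₁, a₂⟩
        simp only [mem_filter, Prod.mk.injEq, Finset.HasAntidiagonal.mem_antidiagonal, mem_singleton]
        constructor
        · rintro ⟨a_left, ⟨a, rfl⟩, rfl⟩
          refine ⟨?_, rfl⟩
          rw [Nat.mul_sub_left_distrib, ← hp, ← a_left, mul_one, Nat.add_sub_cancel]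
        · rintro ⟨rfl, rfl⟩
          match p with
          | 0 => rw [mul_zero] at hp; cases hp
          | p + 1 => rw [hp]; simp [mul_add]
      · suffices #{a ∈ antidiagonal (n + 1) | i + 1 ∣ a.fst ∧ a.snd = i + 1} = 0 by
          convert congr_arg ((↑) : ℕ → α) this; norm_cast
        rw [Finset.card_eq_zero]
        apply eq_empty_of_forall_notMem
        simp only [Prod.forall, mem_filter, not_and, Finset.HasAntidiagonal.mem_antidiagonal]
        rintro _ h₁ h₂ ⟨a, rfl⟩ rfl
        apply h
        simp [← h₂]
  · simp [zero_pow]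

def mkOdd : ℕ ↪ ℕ :=
  ⟨fun i => 2 * i + 1, fun x y h => by linarith⟩

-- The main workhorse of the partition theorem proof.
theorem partialGF_prop (α : Type*) [CommSemiring α] (n : ℕ) (s : Finset ℕ) (hs : ∀ i ∈ s, 0 < i)
    (c : ℕ → Set ℕ) (hc : ∀ i, i ∉ s → 0 ∈ c i) :
    #{p : n.Partition | (∀ j, p.parts.count j ∈ c j) ∧ ∀ j ∈ p.parts, j ∈ s} =
      coeff (R := α) n (∏ i ∈ s, indicatorSeries α ((· * i) '' c i)) := by
  simp_rw [coeff_prod, coeff_indicator, prod_boole, sum_boole]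
  apply congr_arg
  simp only [mem_univ, forall_true_left, not_and, not_forall, exists_prop,
    Set.mem_image, not_exists]
  set phi : (a : Nat.Partition n) →
    a ∈ filter (fun p ↦ (∀ (j : ℕ), Multiset.count j p.parts ∈ c j) ∧ ∀ j ∈ p.parts, j ∈ s) univ →
    ℕ →₀ ℕ := fun p _ => {
      toFun := fun i => Multiset.count i p.parts • i
      support := Finset.filter (fun i => i ≠ 0) p.parts.toFinset
      mem_support_toFun := fun a => by
        simp only [smul_eq_mul, ne_eq, mul_eq_zero, Multiset.count_eq_zero]
        rw [not_or, not_not]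
        simp only [Multiset.mem_toFinset, not_not, mem_filter] }
  refine Finset.card_bij phi ?_ ?_ ?_
  · intro a ha
    simp only [phi, not_forall, not_exists, not_and, exists_prop, mem_filter]
    rw [mem_finsuppAntidiag]
    dsimp only [ne_eq, smul_eq_mul, id_eq, eq_mpr_eq_cast, le_eq_subset, Finsupp.coe_mk]
    simp only [mem_univ, forall_true_left, not_and, not_forall, exists_prop,
      mem_filter, true_and] at ha
    refine ⟨⟨?_, fun i ↦ ?_⟩, fun i _ ↦ ⟨a.parts.count i, ha.1 i, rfl⟩⟩
    · conv_rhs => simp [← a.parts_sum]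
      rw [sum_multiset_count_of_subset _ s]
      · simp only [smul_eq_mul]
      · intro i
        simp only [Multiset.mem_toFinset, not_not, mem_filter]
        apply ha.2
    · simp only [ne_eq, Multiset.mem_toFinset, not_not, mem_filter, and_imp]
      exact fun hi _ ↦ ha.2 i hi
  · intro p₁ hp₁ p₂ hp₂ h
    apply Nat.Partition.ext
    simp only [true_and, mem_univ, mem_filter] at hp₁ hp₂
    ext i
    simp only [phi, ne_eq, Multiset.mem_toFinset, not_not, smul_eq_mul, Finsupp.mk.injEq] at h
    by_cases hi : i = 0
    · rw [hi]
      rw [Multiset.count_eq_zero_of_notMem]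
      · rw [Multiset.count_eq_zero_of_notMem]
        intro a; exact Nat.lt_irrefl 0 (hs 0 (hp₂.2 0 a))
      intro a; exact Nat.lt_irrefl 0 (hs 0 (hp₁.2 0 a))
    · rw [← mul_left_inj' hi]
      rw [funext_iff] at h
      exact h.2 i
  · simp only [phi, mem_filter, mem_finsuppAntidiag, mem_univ, exists_prop, true_and, and_assoc]
    rintro f ⟨hf, hf₃, hf₄⟩
    have hf' : f ∈ finsuppAntidiag s n := mem_finsuppAntidiag.mpr ⟨hf, hf₃⟩
    simp only [mem_finsuppAntidiag] at hf'
    refine ⟨⟨∑ i ∈ s, Multiset.replicate (f i / i) i, ?_, ?_⟩, ?_, ?_, ?_⟩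
    · intro i hi
      simp only [exists_prop, Multiset.mem_sum, mem_map, Function.Embedding.coeFn_mk] at hi
      rcases hi with ⟨t, ht, z⟩
      apply hs
      rwa [Multiset.eq_of_mem_replicate z]
    · simp_rw [Multiset.sum_sum, Multiset.sum_replicate, Nat.nsmul_eq_mul]
      rw [← hf'.1]
      refine sum_congr rfl fun i hi => Nat.div_mul_cancel ?_
      rcases hf₄ i hi with ⟨w, _, hw₂⟩
      rw [← hw₂]
      exact dvd_mul_left _ _
    · intro i
      simp_rw [Multiset.count_sum', Multiset.count_replicate, sum_ite_eq']
      split_ifs with h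
      · rcases hf₄ i h with ⟨w, hw₁, hw₂⟩
        rwa [← hw₂, Nat.mul_div_cancel _ (hs i h)]
      · exact hc _ h
    · intro i hi
      rw [Multiset.mem_sum] at hi
      rcases hi with ⟨j, hj₁, hj₂⟩
      rwa [Multiset.eq_of_mem_replicate hj₂]
    · ext i
      simp_rw [Multiset.count_sum', Multiset.count_replicate, sum_ite_eq']
      simp only [ne_eq, Multiset.mem_toFinset, not_not, smul_eq_mul, ite_mul,
        zero_mul, Finsupp.coe_mk]
      split_ifs with h
      · apply Nat.div_mul_cancel
        rcases hf₄ i h with ⟨w, _, hw₂⟩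
        apply Dvd.intro_left _ hw₂
      · apply symm
        rw [← Finsupp.notMem_support_iff]
        exact notMem_mono hf'.2 h

-- test set-builder
example (P : Nat.Partition 3 → Prop) : ({p : Nat.Partition 3 | P p} : Finset _) = Finset.univ.filter P := rfl

section Helpers
open PowerSeries

lemma constCoeff_one_sub_X_pow (d : ℕ) (hd : 1 ≤ d) :
    constantCoeff (R := ℚ) (1 - (X : PowerSeries ℚ) ^ d) ≠ 0 := by
  rw [map_sub, map_one, map_pow, constantCoeff_X, zero_pow (by omega), sub_zero]
  exact one_ne_zero

lemma one_sub_X_pow_mul_inv (d : ℕ) (hd : 1 ≤ d) :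
    (1 - (X : PowerSeries ℚ) ^ d) * (1 - (X : PowerSeries ℚ) ^ d)⁻¹ = 1 :=
  PowerSeries.mul_inv_cancel _ (constCoeff_one_sub_X_pow d hd)

lemma geom_aux (d a : ℕ) :
    (1 - (X : PowerSeries ℚ) ^ d) * ∑ t ∈ range a, (X : PowerSeries ℚ) ^ (d * t)
      = 1 - (X : PowerSeries ℚ) ^ (d * a) := by
  have h := geom_sum_mul ((X : PowerSeries ℚ) ^ d) a
  have h2 : ∑ t ∈ range a, (X : PowerSeries ℚ) ^ (d * t)
      = ∑ t ∈ range a, ((X : PowerSeries ℚ) ^ d) ^ t := by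
    simp_rw [pow_mul]
  rw [h2, pow_mul]
  linear_combination -h

lemma inv_expand (d a : ℕ) (hd : 1 ≤ d) :
    (1 - (X : PowerSeries ℚ) ^ d)⁻¹
      = (∑ t ∈ range a, (X : PowerSeries ℚ) ^ (d * t))
        + (X : PowerSeries ℚ) ^ (d * a) * (1 - (X : PowerSeries ℚ) ^ d)⁻¹ := by
  have hu := one_sub_X_pow_mul_inv d hd
  have h1 : (1 - (X : PowerSeries ℚ) ^ d) * (∑ t ∈ range a, (X : PowerSeries ℚ) ^ (d * t))
      + (X : PowerSeries ℚ) ^ (d * a) = 1 := by rw [geom_aux]; ring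
  calc (1 - (X : PowerSeries ℚ) ^ d)⁻¹
      = ((1 - (X : PowerSeries ℚ) ^ d) * (∑ t ∈ range a, (X : PowerSeries ℚ) ^ (d * t))
        + (X : PowerSeries ℚ) ^ (d * a)) * (1 - (X : PowerSeries ℚ) ^ d)⁻¹ := by
        rw [h1, one_mul]
    _ = (∑ t ∈ range a, (X : PowerSeries ℚ) ^ (d * t))
          * ((1 - (X : PowerSeries ℚ) ^ d) * (1 - (X : PowerSeries ℚ) ^ d)⁻¹)
        + (X : PowerSeries ℚ) ^ (d * a) * (1 - (X : PowerSeries ℚ) ^ d)⁻¹ := by ring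
    _ = _ := by rw [hu, mul_one]

lemma coeff_mul_X_pow_mul_zero (f h : PowerSeries ℚ) {n a : ℕ} (ha : n < a) :
    coeff (R := ℚ) n (f * ((X : PowerSeries ℚ) ^ a * h)) = 0 := by
  have he : f * ((X : PowerSeries ℚ) ^ a * h) = (f * h) * X ^ a := by ring
  rw [he, coeff_mul_X_pow', if_neg (by omega)]

lemma coeff_expand (f : PowerSeries ℚ) (n a d : ℕ) (ha : 1 ≤ a) (hd : 1 ≤ d) :
    coeff (R := ℚ) n (f * ((X : PowerSeries ℚ) ^ a * (1 - (X : PowerSeries ℚ) ^ d)⁻¹))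
      = ∑ s ∈ range (n + 1), coeff (R := ℚ) n (f * (X : PowerSeries ℚ) ^ (a + d * s)) := by
  rw [inv_expand d (n + 1) hd]
  rw [mul_add, mul_add, map_add]
  have h2 : coeff (R := ℚ) n (f * ((X : PowerSeries ℚ) ^ a
      * ((X : PowerSeries ℚ) ^ (d * (n + 1)) * (1 - (X : PowerSeries ℚ) ^ d)⁻¹))) = 0 := by
    have he : f * ((X : PowerSeries ℚ) ^ a
        * ((X : PowerSeries ℚ) ^ (d * (n + 1)) * (1 - (X : PowerSeries ℚ) ^ d)⁻¹))
        = f * ((X : PowerSeries ℚ) ^ (a + d * (n + 1)) * (1 - (X : PowerSeries ℚ) ^ d)⁻¹) := by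
      rw [pow_add]; ring
    rw [he]
    exact coeff_mul_X_pow_mul_zero _ _ (by nlinarith)
  rw [h2, add_zero, Finset.mul_sum, Finset.mul_sum, map_sum]
  exact Finset.sum_congr rfl fun s _ => by rw [pow_add]

end Helpers


section Indicators
open PowerSeries

lemma inv_one_sub_X_pow_eq_indicator (m : ℕ) (hm : 1 ≤ m) :
    (1 - (X : PowerSeries ℚ) ^ m)⁻¹ = indicatorSeries ℚ {y | m ∣ y} := by
  obtain ⟨k, rfl⟩ : ∃ k, m = k + 1 := ⟨m - 1, by omega⟩
  exact num_series' k

lemma indicator_image_univ (k : ℕ) (hk : 1 ≤ k) :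
    indicatorSeries ℚ ((· * k) '' Set.univ) = (1 - (X : PowerSeries ℚ) ^ k)⁻¹ := by
  have hs : ((· * k) '' Set.univ : Set ℕ) = {y | k ∣ y} := by
    ext y
    simp only [Set.image_univ, Set.mem_range, Set.mem_setOf_eq]
    constructor
    · rintro ⟨x, rfl⟩; exact Dvd.intro_left x rfl
    · rintro ⟨c, rfl⟩; exact ⟨c, mul_comm _ _⟩
  rw [hs, inv_one_sub_X_pow_eq_indicator k hk]

lemma indicator_image_finset (k : ℕ) (hk : 1 ≤ k) (T : Finset ℕ) :
    indicatorSeries ℚ ((· * k) '' ↑T) = ∑ t ∈ T, (X : PowerSeries ℚ) ^ (k * t) := by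
  ext N
  rw [coeff_indicator, map_sum]
  simp_rw [coeff_X_pow]
  by_cases h : N ∈ (· * k) '' (T : Set ℕ)
  · rw [if_pos h]
    obtain ⟨t₀, ht₀, rfl⟩ := h
    rw [Finset.sum_eq_single t₀]
    · rw [if_pos (mul_comm t₀ k)]
    · intro t ht hne
      rw [if_neg]
      intro hEq
      apply hne
      have h' : k * t = k * t₀ := by rw [← hEq]; ring
      exact Nat.eq_of_mul_eq_mul_left (by omega) h'
    · intro habs; exact absurd ht₀ habs
  · rw [if_neg h, Finset.sum_eq_zero]
    intro t ht
    rw [if_neg]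
    intro hEq
    exact h ⟨t, ht, by rw [hEq]; exact mul_comm t k⟩

lemma indicator_shift (m t : ℕ) (hm : 1 ≤ m) :
    indicatorSeries ℚ ((· * m) '' {x | t ≤ x})
      = (X : PowerSeries ℚ) ^ (m * t) * (1 - (X : PowerSeries ℚ) ^ m)⁻¹ := by
  rw [inv_one_sub_X_pow_eq_indicator m hm]
  ext N
  rw [mul_comm ((X : PowerSeries ℚ) ^ (m * t)), coeff_mul_X_pow', coeff_indicator]
  by_cases h : N ∈ (· * m) '' {x | t ≤ x}
  · rw [if_pos h]
    obtain ⟨x, hx, rfl⟩ := h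
    simp only [Set.mem_setOf_eq] at hx
    obtain ⟨c, rfl⟩ := Nat.exists_eq_add_of_le hx
    have hle : m * t ≤ (t + c) * m := by nlinarith
    have hdvd : m ∣ (t + c) * m - m * t := by
      rw [show (t + c) * m = m * t + m * c from by ring, Nat.add_sub_cancel_left]
      exact dvd_mul_right m c
    rw [if_pos hle, coeff_indicator]
    simp only [Set.mem_setOf_eq]
    rw [if_pos hdvd]
  · rw [if_neg h]
    split_ifs with h1
    · rw [coeff_indicator, if_neg]
      rintro ⟨c, hc⟩
      rw [Nat.sub_eq_iff_eq_add h1] at hc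
      exact h ⟨t + c, by simp, by rw [hc]; ring⟩
    · rfl

end Indicators

noncomputable def Phi (r n : ℕ) : PowerSeries ℚ :=
  ∏ k ∈ Finset.Icc 1 n, if ¬ r ∣ k then (1 - (X : PowerSeries ℚ) ^ k)⁻¹ else 1

lemma Phi_eq (r n : ℕ) :
    Phi r n = ∏ k ∈ (Finset.Icc 1 n).filter (fun k => ¬ r ∣ k),
      (1 - (X : PowerSeries ℚ) ^ k)⁻¹ :=
  (Finset.prod_filter _ _).symm

end
end Aux

open Aux

/-- The set of `r`-class regular partitions of `n`: no part divisible by `r`. -/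
noncomputable def CP (r n : ℕ) : Finset (n.Partition) :=
  Finset.univ.filter (fun l => ∀ p ∈ l.parts, ¬ r ∣ p)

/-- The set of `r`-regular partitions of `n`: each part has multiplicity `< r`. -/
noncomputable def RP (r n : ℕ) : Finset (n.Partition) :=
  Finset.univ.filter (fun l => ∀ i, l.parts.count i < r)

/-- `X_{r,j,n}`: total number of parts `≡ j (mod r)` over all `r`-class regular partitions. -/
noncomputable def Xrjn (r j n : ℕ) : ℕ :=
  ∑ ρ ∈ CP r n, Multiset.card (ρ.parts.filter (fun p => p % r = j))

/-- `Y_{r,j,n}`: total number of part-sizes of multiplicity `≥ j` over `r`-regular partitions. -/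
noncomputable def Yrjn (r j n : ℕ) : ℕ :=
  ∑ l ∈ RP r n, (l.parts.toFinset.filter (fun i => j ≤ l.parts.count i)).card

/-- `c_{r,n}`: the coefficient of `q^n` in `Φ_r(q) · Σ_{k ≥ 1} q^{rk}/(1-q^{rk})`, both factors
truncated at index `≤ n` (which does not change the `n`-th coefficient). -/
noncomputable def cCoeff (r n : ℕ) : ℚ :=
  PowerSeries.coeff (R := ℚ) n
    ((∏ k ∈ Finset.Icc 1 n,
        if ¬ r ∣ k then (1 - (PowerSeries.X : PowerSeries ℚ) ^ k)⁻¹ else 1) *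
      ∑ k ∈ Finset.Icc 1 n,
        (PowerSeries.X : PowerSeries ℚ) ^ (r * k) *
          (1 - (PowerSeries.X : PowerSeries ℚ) ^ (r * k))⁻¹)

noncomputable section Main

lemma part_mem_Icc {n : ℕ} (p : n.Partition) {i : ℕ} (hi : i ∈ p.parts) :
    i ∈ Finset.Icc 1 n := by
  refine Finset.mem_Icc.mpr ⟨p.parts_pos hi, ?_⟩
  simpa [p.parts_sum] using Multiset.single_le_sum (fun _ _ => Nat.zero_le _) _ hi

lemma count_le_n {n : ℕ} (p : n.Partition) (m : ℕ) : p.parts.count m ≤ n := by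
  calc p.parts.count m ≤ Multiset.card p.parts := Multiset.count_le_card _ _
    _ ≤ p.parts.sum := by
        have := Multiset.card_nsmul_le_sum (s := p.parts) (a := 1) (fun x hx => p.parts_pos hx)
        simpa using this
    _ = n := p.parts_sum

/-- `CP` counting as a coefficient. -/
lemma CP_count (r n m t : ℕ) (hm : m ∈ Finset.Icc 1 n) (hmr : ¬ r ∣ m) (ht : 1 ≤ t) :
    (((CP r n).filter (fun ρ => t ≤ ρ.parts.count m)).card : ℚ)
      = coeff (R := ℚ) n (Phi r n * (X : PowerSeries ℚ) ^ (m * t)) := by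
  classical
  set s : Finset ℕ := (Finset.Icc 1 n).filter (fun k => ¬ r ∣ k) with hs_def
  have hm1 : 1 ≤ m := (Finset.mem_Icc.mp hm).1
  have hms : m ∈ s := Finset.mem_filter.mpr ⟨hm, hmr⟩
  have hs : ∀ i ∈ s, 0 < i := fun i hi => (Finset.mem_Icc.mp (Finset.mem_filter.mp hi).1).1
  set c : ℕ → Set ℕ := fun k => if k = m then {x | t ≤ x} else Set.univ with hc_def
  have hc : ∀ i, i ∉ s → 0 ∈ c i := by
    intro i hi
    have hne : i ≠ m := fun h => hi (h ▸ hms)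
    simp [hc_def, hne]
  have h := Aux.partialGF_prop ℚ n s hs c hc
  have hL : ((CP r n).filter (fun ρ => t ≤ ρ.parts.count m))
      = Finset.univ.filter
          (fun p : n.Partition => (∀ j, p.parts.count j ∈ c j) ∧ ∀ j ∈ p.parts, j ∈ s) := by
    ext p
    simp only [CP, Finset.filter_filter, Finset.mem_filter, Finset.mem_univ, true_and]
    constructor
    · rintro ⟨h1, h2⟩
      refine ⟨fun k => ?_, fun q hq => Finset.mem_filter.mpr ⟨part_mem_Icc p hq, h1 q hq⟩⟩
      by_cases hk : k = m
      · subst hk; simp [hc_def, h2]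
      · simp [hc_def, hk]
    · rintro ⟨h1, h2⟩
      refine ⟨fun q hq => (Finset.mem_filter.mp (h2 q hq)).2, ?_⟩
      have := h1 m
      simpa [hc_def] using this
  have hR : (∏ i ∈ s, Aux.indicatorSeries ℚ ((· * i) '' c i))
      = Phi r n * (X : PowerSeries ℚ) ^ (m * t) := by
    rw [← Finset.mul_prod_erase s _ hms]
    have h1 : Aux.indicatorSeries ℚ ((· * m) '' c m)
        = (X : PowerSeries ℚ) ^ (m * t) * (1 - (X : PowerSeries ℚ) ^ m)⁻¹ := by
      rw [show c m = {x | t ≤ x} by simp [hc_def]]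
      exact indicator_shift m t hm1
    have h2 : ∀ k ∈ s.erase m, Aux.indicatorSeries ℚ ((· * k) '' c k)
        = (1 - (X : PowerSeries ℚ) ^ k)⁻¹ := by
      intro k hk
      have hkm : k ≠ m := (Finset.mem_erase.mp hk).1
      have hk1 : 0 < k := hs k (Finset.mem_erase.mp hk).2
      rw [show c k = Set.univ by simp [hc_def, hkm]]
      exact indicator_image_univ k hk1
    rw [h1, Finset.prod_congr rfl h2]
    calc (X : PowerSeries ℚ) ^ (m * t) * (1 - (X : PowerSeries ℚ) ^ m)⁻¹
          * ∏ k ∈ s.erase m, (1 - (X : PowerSeries ℚ) ^ k)⁻¹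
        = (X : PowerSeries ℚ) ^ (m * t) * ((1 - (X : PowerSeries ℚ) ^ m)⁻¹
            * ∏ k ∈ s.erase m, (1 - (X : PowerSeries ℚ) ^ k)⁻¹) := by ring
      _ = (X : PowerSeries ℚ) ^ (m * t) * ∏ k ∈ s, (1 - (X : PowerSeries ℚ) ^ k)⁻¹ := by
            rw [Finset.mul_prod_erase s (fun k => (1 - (X : PowerSeries ℚ) ^ k)⁻¹) hms]
      _ = Phi r n * (X : PowerSeries ℚ) ^ (m * t) := by rw [Phi_eq]; ring
  rw [hL, ← hR]
  exact h

/-- `RP` counting as a coefficient. -/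
lemma RP_count (r j n i : ℕ) (hr : 2 ≤ r) (hj : 1 ≤ j) (hi : i ∈ Finset.Icc 1 n) :
    (((RP r n).filter (fun l => j ≤ l.parts.count i)).card : ℚ)
      = coeff (R := ℚ) n ((∑ t ∈ Finset.Ico j r, (X : PowerSeries ℚ) ^ (i * t))
          * ∏ k ∈ (Finset.Icc 1 n).erase i,
              (∑ t ∈ Finset.range r, (X : PowerSeries ℚ) ^ (k * t))) := by
  classical
  set s : Finset ℕ := Finset.Icc 1 n with hs_def
  have hi1 : 1 ≤ i := (Finset.mem_Icc.mp hi).1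
  have hs : ∀ k ∈ s, 0 < k := fun k hk => (Finset.mem_Icc.mp hk).1
  set c : ℕ → Set ℕ := fun k => if k = i then {x | j ≤ x ∧ x < r} else {x | x < r} with hc_def
  have hc : ∀ k, k ∉ s → 0 ∈ c k := by
    intro k hk
    have hne : k ≠ i := fun h => hk (h ▸ hi)
    simp only [hc_def, if_neg hne, Set.mem_setOf_eq]
    omega
  have h := Aux.partialGF_prop ℚ n s hs c hc
  have hL : ((RP r n).filter (fun l => j ≤ l.parts.count i))
      = Finset.univ.filter
          (fun p : n.Partition => (∀ k, p.parts.count k ∈ c k) ∧ ∀ k ∈ p.parts, k ∈ s) := by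
    ext p
    simp only [RP, Finset.filter_filter, Finset.mem_filter, Finset.mem_univ, true_and]
    constructor
    · rintro ⟨h1, h2⟩
      refine ⟨fun k => ?_, fun q hq => part_mem_Icc p hq⟩
      by_cases hk : k = i
      · subst hk; simp only [hc_def, if_pos rfl, Set.mem_setOf_eq]; exact ⟨h2, h1 k⟩
      · simp only [hc_def, if_neg hk, Set.mem_setOf_eq]; exact h1 k
    · rintro ⟨h1, h2⟩
      constructor
      · intro k
        have := h1 k
        by_cases hk : k = i
        · subst hk; simp only [hc_def, if_pos rfl, Set.mem_setOf_eq] at this; exact this.2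
        · simpa only [hc_def, if_neg hk, Set.mem_setOf_eq] using this
      · have := h1 i
        simp only [hc_def, if_pos rfl, Set.mem_setOf_eq] at this
        exact this.1
  have hR : (∏ k ∈ s, Aux.indicatorSeries ℚ ((· * k) '' c k))
      = (∑ t ∈ Finset.Ico j r, (X : PowerSeries ℚ) ^ (i * t))
          * ∏ k ∈ s.erase i, (∑ t ∈ Finset.range r, (X : PowerSeries ℚ) ^ (k * t)) := by
    rw [← Finset.mul_prod_erase s _ hi]
    congr 1
    · rw [show c i = ↑(Finset.Ico j r) by simp only [hc_def, if_pos rfl, Finset.coe_Ico]; rfl]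
      exact indicator_image_finset i hi1 (Finset.Ico j r)
    · refine Finset.prod_congr rfl fun k hk => ?_
      have hkm : k ≠ i := (Finset.mem_erase.mp hk).1
      have hk1 : 0 < k := hs k (Finset.mem_erase.mp hk).2
      rw [show c k = ↑(Finset.range r) by simp only [hc_def, if_neg hkm, Finset.coe_range]; rfl]
      exact indicator_image_finset k hk1 (Finset.range r)
  rw [hL, ← hR]
  exact h

lemma Q_eq (k r : ℕ) (hk : 1 ≤ k) :
    (∑ t ∈ Finset.range r, (X : PowerSeries ℚ) ^ (k * t))
      = (1 - (X : PowerSeries ℚ) ^ (r * k)) * (1 - (X : PowerSeries ℚ) ^ k)⁻¹ := by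
  have h1 := geom_aux k r
  have hu := one_sub_X_pow_mul_inv k hk
  rw [mul_comm r k]
  calc (∑ t ∈ Finset.range r, (X : PowerSeries ℚ) ^ (k * t))
      = (∑ t ∈ Finset.range r, (X : PowerSeries ℚ) ^ (k * t))
        * ((1 - (X : PowerSeries ℚ) ^ k) * (1 - (X : PowerSeries ℚ) ^ k)⁻¹) := by
        rw [hu, mul_one]
    _ = ((1 - (X : PowerSeries ℚ) ^ k) * ∑ t ∈ Finset.range r, (X : PowerSeries ℚ) ^ (k * t))
        * (1 - (X : PowerSeries ℚ) ^ k)⁻¹ := by ring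
    _ = _ := by rw [h1]

lemma filter_dvd_eq_image (r n : ℕ) (hr : 2 ≤ r) :
    (Finset.Icc 1 n).filter (fun k => r ∣ k)
      = (Finset.Icc 1 (n / r)).image (fun k => r * k) := by
  ext a
  simp only [Finset.mem_filter, Finset.mem_Icc, Finset.mem_image]
  constructor
  · rintro ⟨⟨h1, h2⟩, ⟨c, rfl⟩⟩
    refine ⟨c, ⟨?_, ?_⟩, rfl⟩
    · rcases Nat.eq_zero_or_pos c with rfl | h
      · simp at h1
      · exact h
    · rw [Nat.le_div_iff_mul_le (by omega)]
      exact le_trans (le_of_eq (mul_comm c r)) h2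
  · rintro ⟨c, ⟨h1, h2⟩, rfl⟩
    have hc : c * r ≤ n := (Nat.le_div_iff_mul_le (by omega)).mp h2
    refine ⟨⟨Nat.mul_pos (by omega) h1, le_trans (le_of_eq (mul_comm r c)) hc⟩, ⟨c, rfl⟩⟩

lemma filter_le_eq_Icc (r n : ℕ) (hr : 2 ≤ r) :
    (Finset.Icc 1 n).filter (fun k => r * k ≤ n) = Finset.Icc 1 (n / r) := by
  ext k
  simp only [Finset.mem_filter, Finset.mem_Icc]
  constructor
  · rintro ⟨⟨h1, h2⟩, h3⟩
    exact ⟨h1, (Nat.le_div_iff_mul_le (by omega)).mpr (by rw [mul_comm]; exact h3)⟩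
  · rintro ⟨h1, h2⟩
    have h3 : k * r ≤ n := (Nat.le_div_iff_mul_le (by omega)).mp h2
    have h4 : k ≤ k * r := Nat.le_mul_of_pos_right k (by omega)
    exact ⟨⟨h1, le_trans h4 h3⟩, by rw [mul_comm]; exact h3⟩

lemma prod_Q_eq (r n : ℕ) (hr : 2 ≤ r) :
    (∏ k ∈ Finset.Icc 1 n, ∑ t ∈ Finset.range r, (X : PowerSeries ℚ) ^ (k * t))
      = Phi r n * ∏ k ∈ (Finset.Icc 1 n).filter (fun k => n < r * k),
          (1 - (X : PowerSeries ℚ) ^ (r * k)) := by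
  have step1 : ∀ k ∈ Finset.Icc 1 n,
      (∑ t ∈ Finset.range r, (X : PowerSeries ℚ) ^ (k * t))
        = (1 - (X : PowerSeries ℚ) ^ (r * k)) * (1 - (X : PowerSeries ℚ) ^ k)⁻¹ :=
    fun k hk => Q_eq k r (Finset.mem_Icc.mp hk).1
  have step2 : (∏ k ∈ Finset.Icc 1 n, (1 - (X : PowerSeries ℚ) ^ k)⁻¹)
      = (∏ k ∈ (Finset.Icc 1 n).filter (fun k => r ∣ k), (1 - (X : PowerSeries ℚ) ^ k)⁻¹)
        * Phi r n := by
    rw [Phi_eq, Finset.prod_filter_mul_prod_filter_not (Finset.Icc 1 n) (fun k => r ∣ k)]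
  have step3 : (∏ k ∈ (Finset.Icc 1 n).filter (fun k => r ∣ k),
        (1 - (X : PowerSeries ℚ) ^ k)⁻¹)
      = ∏ k ∈ Finset.Icc 1 (n / r), (1 - (X : PowerSeries ℚ) ^ (r * k))⁻¹ := by
    rw [filter_dvd_eq_image r n hr, Finset.prod_image]
    intro x _ y _ hxy
    exact Nat.eq_of_mul_eq_mul_left (by omega) hxy
  have step4 : (∏ k ∈ Finset.Icc 1 n, (1 - (X : PowerSeries ℚ) ^ (r * k)))
      = (∏ k ∈ Finset.Icc 1 (n / r), (1 - (X : PowerSeries ℚ) ^ (r * k)))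
        * ∏ k ∈ (Finset.Icc 1 n).filter (fun k => n < r * k),
            (1 - (X : PowerSeries ℚ) ^ (r * k)) := by
    rw [← filter_le_eq_Icc r n hr,
      ← Finset.prod_filter_mul_prod_filter_not (Finset.Icc 1 n) (fun k => r * k ≤ n)]
    congr 2
    apply Finset.filter_congr
    intro k _
    simp [not_le]
  have hone : (∏ k ∈ Finset.Icc 1 (n / r),
      ((1 - (X : PowerSeries ℚ) ^ (r * k)) * (1 - (X : PowerSeries ℚ) ^ (r * k))⁻¹)) = 1 :=
    Finset.prod_eq_one fun k hk =>
      one_sub_X_pow_mul_inv (r * k) (Nat.mul_pos (by omega) (Finset.mem_Icc.mp hk).1)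
  calc (∏ k ∈ Finset.Icc 1 n, ∑ t ∈ Finset.range r, (X : PowerSeries ℚ) ^ (k * t))
      = ∏ k ∈ Finset.Icc 1 n,
          ((1 - (X : PowerSeries ℚ) ^ (r * k)) * (1 - (X : PowerSeries ℚ) ^ k)⁻¹) :=
        Finset.prod_congr rfl step1
    _ = (∏ k ∈ Finset.Icc 1 n, (1 - (X : PowerSeries ℚ) ^ (r * k)))
        * ∏ k ∈ Finset.Icc 1 n, (1 - (X : PowerSeries ℚ) ^ k)⁻¹ := Finset.prod_mul_distrib
    _ = ((∏ k ∈ Finset.Icc 1 (n / r), (1 - (X : PowerSeries ℚ) ^ (r * k)))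
          * ∏ k ∈ (Finset.Icc 1 n).filter (fun k => n < r * k),
              (1 - (X : PowerSeries ℚ) ^ (r * k)))
        * ((∏ k ∈ Finset.Icc 1 (n / r), (1 - (X : PowerSeries ℚ) ^ (r * k))⁻¹) * Phi r n) := by
        rw [step4, step2, step3]
    _ = (∏ k ∈ Finset.Icc 1 (n / r),
          ((1 - (X : PowerSeries ℚ) ^ (r * k)) * (1 - (X : PowerSeries ℚ) ^ (r * k))⁻¹))
        * (Phi r n * ∏ k ∈ (Finset.Icc 1 n).filter (fun k => n < r * k),
            (1 - (X : PowerSeries ℚ) ^ (r * k))) := by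
        rw [Finset.prod_mul_distrib]; ring
    _ = _ := by rw [hone, one_mul]

lemma Y_term (r j n i : ℕ) (hr : 2 ≤ r) (hj : 1 ≤ j) (hjr : j ≤ r - 1)
    (hi : i ∈ Finset.Icc 1 n) :
    coeff (R := ℚ) n ((∑ t ∈ Finset.Ico j r, (X : PowerSeries ℚ) ^ (i * t))
        * ∏ k ∈ (Finset.Icc 1 n).erase i,
            (∑ t ∈ Finset.range r, (X : PowerSeries ℚ) ^ (k * t)))
      = ∑ s ∈ Finset.range (n + 1),
          (coeff (R := ℚ) n (Phi r n * (X : PowerSeries ℚ) ^ (i * j + i * r * s))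
            - coeff (R := ℚ) n (Phi r n * (X : PowerSeries ℚ) ^ (i * r + i * r * s))) := by
  have hi1 : 1 ≤ i := (Finset.mem_Icc.mp hi).1
  have hjr' : j ≤ r := by omega
  have hir1 : 1 ≤ i * r := Nat.mul_pos (by omega) (by omega)
  have hij1 : 1 ≤ i * j := Nat.mul_pos (by omega) (by omega)
  have h1 : (1 - (X : PowerSeries ℚ) ^ i) * ∑ t ∈ Finset.range r, (X : PowerSeries ℚ) ^ (i * t)
      = 1 - (X : PowerSeries ℚ) ^ (i * r) := geom_aux i r
  have h3 : (1 - (X : PowerSeries ℚ) ^ (i * r)) * (1 - (X : PowerSeries ℚ) ^ (i * r))⁻¹ = 1 :=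
    one_sub_X_pow_mul_inv _ hir1
  have hRi : (1 - (X : PowerSeries ℚ) ^ i) * ∑ t ∈ Finset.Ico j r, (X : PowerSeries ℚ) ^ (i * t)
      = (X : PowerSeries ℚ) ^ (i * j) - (X : PowerSeries ℚ) ^ (i * r) := by
    rw [Finset.sum_Ico_eq_sub _ hjr']
    have g1 := geom_aux i r
    have g2 := geom_aux i j
    linear_combination g1 - g2
  have hRi2 : (∑ t ∈ Finset.Ico j r, (X : PowerSeries ℚ) ^ (i * t))
      = ((X : PowerSeries ℚ) ^ (i * j) - (X : PowerSeries ℚ) ^ (i * r))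
        * (1 - (X : PowerSeries ℚ) ^ (i * r))⁻¹
        * ∑ t ∈ Finset.range r, (X : PowerSeries ℚ) ^ (i * t) := by
    calc (∑ t ∈ Finset.Ico j r, (X : PowerSeries ℚ) ^ (i * t))
        = (∑ t ∈ Finset.Ico j r, (X : PowerSeries ℚ) ^ (i * t))
          * ((1 - (X : PowerSeries ℚ) ^ (i * r)) * (1 - (X : PowerSeries ℚ) ^ (i * r))⁻¹) := by
          rw [h3, mul_one]
      _ = (∑ t ∈ Finset.Ico j r, (X : PowerSeries ℚ) ^ (i * t))
          * (((1 - (X : PowerSeries ℚ) ^ i) * ∑ t ∈ Finset.range r, (X : PowerSeries ℚ) ^ (i * t))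
            * (1 - (X : PowerSeries ℚ) ^ (i * r))⁻¹) := by rw [h1]
      _ = ((1 - (X : PowerSeries ℚ) ^ i)
            * ∑ t ∈ Finset.Ico j r, (X : PowerSeries ℚ) ^ (i * t))
          * (1 - (X : PowerSeries ℚ) ^ (i * r))⁻¹
          * ∑ t ∈ Finset.range r, (X : PowerSeries ℚ) ^ (i * t) := by ring
      _ = _ := by rw [hRi]
  have hprod : (∑ t ∈ Finset.range r, (X : PowerSeries ℚ) ^ (i * t))
      * ∏ k ∈ (Finset.Icc 1 n).erase i,
          (∑ t ∈ Finset.range r, (X : PowerSeries ℚ) ^ (k * t))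
      = ∏ k ∈ Finset.Icc 1 n, (∑ t ∈ Finset.range r, (X : PowerSeries ℚ) ^ (k * t)) :=
    Finset.mul_prod_erase (Finset.Icc 1 n)
      (fun k => ∑ t ∈ Finset.range r, (X : PowerSeries ℚ) ^ (k * t)) hi
  have key : ((∑ t ∈ Finset.Ico j r, (X : PowerSeries ℚ) ^ (i * t))
      * ∏ k ∈ (Finset.Icc 1 n).erase i,
          (∑ t ∈ Finset.range r, (X : PowerSeries ℚ) ^ (k * t)))
      = (Phi r n * (((X : PowerSeries ℚ) ^ (i * j) - (X : PowerSeries ℚ) ^ (i * r))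
          * (1 - (X : PowerSeries ℚ) ^ (i * r))⁻¹))
        * ∏ k ∈ (Finset.Icc 1 n).filter (fun k => n < r * k),
            (1 - (X : PowerSeries ℚ) ^ (r * k)) := by
    calc ((∑ t ∈ Finset.Ico j r, (X : PowerSeries ℚ) ^ (i * t))
        * ∏ k ∈ (Finset.Icc 1 n).erase i,
            (∑ t ∈ Finset.range r, (X : PowerSeries ℚ) ^ (k * t)))
        = ((X : PowerSeries ℚ) ^ (i * j) - (X : PowerSeries ℚ) ^ (i * r))
          * (1 - (X : PowerSeries ℚ) ^ (i * r))⁻¹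
          * ((∑ t ∈ Finset.range r, (X : PowerSeries ℚ) ^ (i * t))
            * ∏ k ∈ (Finset.Icc 1 n).erase i,
                (∑ t ∈ Finset.range r, (X : PowerSeries ℚ) ^ (k * t))) := by
          rw [hRi2]; ring
      _ = ((X : PowerSeries ℚ) ^ (i * j) - (X : PowerSeries ℚ) ^ (i * r))
          * (1 - (X : PowerSeries ℚ) ^ (i * r))⁻¹
          * (Phi r n * ∏ k ∈ (Finset.Icc 1 n).filter (fun k => n < r * k),
              (1 - (X : PowerSeries ℚ) ^ (r * k))) := by rw [hprod, prod_Q_eq r n hr]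
      _ = _ := by ring
  rw [key, coeff_mul_prod_one_sub_of_lt_order]
  · have hsplit : Phi r n * (((X : PowerSeries ℚ) ^ (i * j) - (X : PowerSeries ℚ) ^ (i * r))
        * (1 - (X : PowerSeries ℚ) ^ (i * r))⁻¹)
        = Phi r n * ((X : PowerSeries ℚ) ^ (i * j) * (1 - (X : PowerSeries ℚ) ^ (i * r))⁻¹)
          - Phi r n * ((X : PowerSeries ℚ) ^ (i * r) * (1 - (X : PowerSeries ℚ) ^ (i * r))⁻¹) := by
      ring
    rw [hsplit, map_sub, coeff_expand _ n (i * j) (i * r) hij1 hir1,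
      coeff_expand _ n (i * r) (i * r) hir1 hir1, ← Finset.sum_sub_distrib]
  · intro k hk
    rw [order_X_pow]
    exact_mod_cast (Finset.mem_filter.mp hk).2

lemma count_sum_ite {c n : ℕ} (hc : c ≤ n) :
    c = ∑ t ∈ Finset.Icc 1 n, if t ≤ c then 1 else 0 := by
  have hfil : (Finset.Icc 1 n).filter (fun t => t ≤ c) = Finset.Icc 1 c := by
    ext t; simp only [Finset.mem_filter, Finset.mem_Icc]; omega
  calc c = (Finset.Icc 1 c).card := by rw [Nat.card_Icc]; omega
    _ = ((Finset.Icc 1 n).filter (fun t => t ≤ c)).card := by rw [hfil]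
    _ = _ := Finset.card_filter _ _

lemma card_multiset_filter {n : ℕ} (p : n.Partition) (q : ℕ → Prop) [DecidablePred q] :
    Multiset.card (p.parts.filter q) = ∑ m ∈ (Finset.Icc 1 n).filter q, p.parts.count m := by
  have hsub : (p.parts.filter q).toFinset ⊆ (Finset.Icc 1 n).filter q := by
    intro m hm
    rw [Multiset.mem_toFinset, Multiset.mem_filter] at hm
    exact Finset.mem_filter.mpr ⟨part_mem_Icc p hm.1, hm.2⟩
  calc Multiset.card (p.parts.filter q)
      = ∑ m ∈ (p.parts.filter q).toFinset, (p.parts.filter q).count m :=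
        (Multiset.toFinset_sum_count_eq _).symm
    _ = ∑ m ∈ (Finset.Icc 1 n).filter q, (p.parts.filter q).count m := by
        refine Finset.sum_subset hsub fun x _ hx => ?_
        exact Multiset.count_eq_zero.mpr (fun hmem => hx (Multiset.mem_toFinset.mpr hmem))
    _ = ∑ m ∈ (Finset.Icc 1 n).filter q, p.parts.count m := by
        refine Finset.sum_congr rfl fun m hm => ?_
        exact Multiset.count_filter_of_pos (Finset.mem_filter.mp hm).2

lemma X_eq_nat (r j n : ℕ) :
    Xrjn r j n = ∑ m ∈ (Finset.Icc 1 n).filter (fun m => m % r = j), ∑ t ∈ Finset.Icc 1 n,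
      ((CP r n).filter (fun ρ => t ≤ ρ.parts.count m)).card := by
  unfold Xrjn
  have step1 : ∀ ρ ∈ CP r n, Multiset.card (ρ.parts.filter (fun p => p % r = j))
      = ∑ m ∈ (Finset.Icc 1 n).filter (fun m => m % r = j), ρ.parts.count m :=
    fun ρ _ => card_multiset_filter ρ _
  rw [Finset.sum_congr rfl step1, Finset.sum_comm]
  refine Finset.sum_congr rfl fun m _ => ?_
  calc ∑ ρ ∈ CP r n, ρ.parts.count m
      = ∑ ρ ∈ CP r n, ∑ t ∈ Finset.Icc 1 n, if t ≤ ρ.parts.count m then 1 else 0 :=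
        Finset.sum_congr rfl fun ρ _ => count_sum_ite (count_le_n ρ m)
    _ = ∑ t ∈ Finset.Icc 1 n, ∑ ρ ∈ CP r n, if t ≤ ρ.parts.count m then 1 else 0 :=
        Finset.sum_comm
    _ = _ := Finset.sum_congr rfl fun t _ => (Finset.card_filter _ _).symm

lemma X_eq (r j n : ℕ) (hr : 2 ≤ r) (hj : 1 ≤ j) :
    (Xrjn r j n : ℚ) = ∑ m ∈ (Finset.Icc 1 n).filter (fun m => m % r = j),
      ∑ t ∈ Finset.Icc 1 n, coeff (R := ℚ) n (Phi r n * (X : PowerSeries ℚ) ^ (m * t)) := by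
  rw [X_eq_nat r j n]
  push_cast
  refine Finset.sum_congr rfl fun m hm => Finset.sum_congr rfl fun t ht => ?_
  obtain ⟨hmIcc, hmj⟩ := Finset.mem_filter.mp hm
  have hmr : ¬ r ∣ m := by
    intro hd
    rw [Nat.mod_eq_zero_of_dvd hd] at hmj
    omega
  exact CP_count r n m t hmIcc hmr (Finset.mem_Icc.mp ht).1

lemma Y_eq_nat (r j n : ℕ) (hj : 1 ≤ j) :
    Yrjn r j n = ∑ i ∈ Finset.Icc 1 n,
      ((RP r n).filter (fun l => j ≤ l.parts.count i)).card := by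
  unfold Yrjn
  have step1 : ∀ l : n.Partition, (l.parts.toFinset.filter (fun i => j ≤ l.parts.count i))
      = (Finset.Icc 1 n).filter (fun i => j ≤ l.parts.count i) := by
    intro l; ext i
    simp only [Finset.mem_filter, Multiset.mem_toFinset]
    constructor
    · rintro ⟨h1, h2⟩; exact ⟨part_mem_Icc l h1, h2⟩
    · rintro ⟨h1, h2⟩
      exact ⟨Multiset.count_pos.mp (by omega), h2⟩
  calc ∑ l ∈ RP r n, (l.parts.toFinset.filter (fun i => j ≤ l.parts.count i)).card
      = ∑ l ∈ RP r n, ∑ i ∈ Finset.Icc 1 n, if j ≤ l.parts.count i then 1 else 0 := by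
        refine Finset.sum_congr rfl fun l _ => ?_
        rw [step1 l, Finset.card_filter]
    _ = ∑ i ∈ Finset.Icc 1 n, ∑ l ∈ RP r n, if j ≤ l.parts.count i then 1 else 0 :=
        Finset.sum_comm
    _ = _ := Finset.sum_congr rfl fun i _ => (Finset.card_filter _ _).symm

lemma Y_eq (r j n : ℕ) (hr : 2 ≤ r) (hj : 1 ≤ j) (hjr : j ≤ r - 1) :
    (Yrjn r j n : ℚ) = ∑ i ∈ Finset.Icc 1 n, ∑ s ∈ Finset.range (n + 1),
      (coeff (R := ℚ) n (Phi r n * (X : PowerSeries ℚ) ^ (i * j + i * r * s))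
        - coeff (R := ℚ) n (Phi r n * (X : PowerSeries ℚ) ^ (i * r + i * r * s))) := by
  rw [Y_eq_nat r j n hj]
  push_cast
  refine Finset.sum_congr rfl fun i hi => ?_
  rw [RP_count r j n i hr hj hi]
  exact Y_term r j n i hr hj hjr hi

lemma c_eq (r n : ℕ) (hr : 2 ≤ r) :
    cCoeff r n = ∑ k ∈ Finset.Icc 1 n, ∑ s ∈ Finset.range (n + 1),
      coeff (R := ℚ) n (Phi r n * (X : PowerSeries ℚ) ^ (r * k + r * k * s)) := by
  unfold cCoeff
  rw [Finset.mul_sum, map_sum]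
  refine Finset.sum_congr rfl fun k hk => ?_
  have hk1 : 1 ≤ r * k := Nat.mul_pos (by omega) (Finset.mem_Icc.mp hk).1
  exact coeff_expand _ n (r * k) (r * k) hk1 hk1

lemma restrict_sum {α : Type*} (A : Finset α) (v : α → ℕ) (g : ℕ → ℚ) {n : ℕ}
    (hg : ∀ b, n < b → g b = 0) :
    ∑ p ∈ A, g (v p) = ∑ p ∈ A.filter (fun p => v p ≤ n), g (v p) := by
  refine (Finset.sum_subset (Finset.filter_subset _ _) fun x hx hnx => ?_).symm
  have hv : ¬ v x ≤ n := fun hv => hnx (Finset.mem_filter.mpr ⟨hx, hv⟩)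
  exact hg _ (Nat.not_le.mp hv)

lemma final_count (r j n : ℕ) (hr : 2 ≤ r) (hj : 1 ≤ j) (hjr : j ≤ r - 1) (g : ℕ → ℚ)
    (hg : ∀ b, n < b → g b = 0) :
    ∑ m ∈ (Finset.Icc 1 n).filter (fun m => m % r = j), ∑ t ∈ Finset.Icc 1 n, g (m * t)
      = (∑ i ∈ Finset.Icc 1 n, ∑ s ∈ Finset.range (n + 1),
          (g (i * j + i * r * s) - g (i * r + i * r * s)))
        + ∑ k ∈ Finset.Icc 1 n, ∑ s ∈ Finset.range (n + 1), g (r * k + r * k * s) := by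
  have hjrlt : j < r := by omega
  have hcancel : ∑ i ∈ Finset.Icc 1 n, ∑ s ∈ Finset.range (n + 1), g (i * r + i * r * s)
      = ∑ k ∈ Finset.Icc 1 n, ∑ s ∈ Finset.range (n + 1), g (r * k + r * k * s) := by
    refine Finset.sum_congr rfl fun i _ => Finset.sum_congr rfl fun s _ => ?_
    congr 1; ring
  have hdec : ∀ m : ℕ, m % r = j → r * (m / r) + j = m := by
    intro m hmod
    conv_rhs => rw [← Nat.div_add_mod m r, hmod]
  have hdiv : ∀ m : ℕ, m % r = j → (m - j) / r = m / r := by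
    intro m hmod
    have h1 := hdec m hmod
    have hsub : m - j = r * (m / r) := by omega
    rw [hsub, Nat.mul_div_cancel_left _ (by omega : 0 < r)]
  have main : ∑ m ∈ (Finset.Icc 1 n).filter (fun m => m % r = j),
        ∑ t ∈ Finset.Icc 1 n, g (m * t)
      = ∑ i ∈ Finset.Icc 1 n, ∑ s ∈ Finset.range (n + 1), g (i * j + i * r * s) := by
    rw [← Finset.sum_product', ← Finset.sum_product']
    rw [restrict_sum (((Finset.Icc 1 n).filter (fun m => m % r = j)) ×ˢ Finset.Icc 1 n)
        (fun p => p.1 * p.2) g hg,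
      restrict_sum (Finset.Icc 1 n ×ˢ Finset.range (n + 1))
        (fun p => p.1 * j + p.1 * r * p.2) g hg]
    refine Finset.sum_nbij' (fun p => (p.2, (p.1 - j) / r)) (fun p => (j + r * p.2, p.1))
      ?_ ?_ ?_ ?_ ?_
    · rintro ⟨m, t⟩ hp
      have hmem := (Finset.mem_filter.mp hp).1
      have hval : m * t ≤ n := (Finset.mem_filter.mp hp).2
      have hmmem := (Finset.mem_product.mp hmem).1
      have htIcc : t ∈ Finset.Icc 1 n := (Finset.mem_product.mp hmem).2
      have hmod : m % r = j := (Finset.mem_filter.mp hmmem).2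
      have hmIcc := Finset.mem_Icc.mp (Finset.mem_filter.mp hmmem).1
      have ht := Finset.mem_Icc.mp htIcc
      have h1 := hdec m hmod
      have hq : m / r ≤ m := Nat.div_le_self m r
      refine Finset.mem_filter.mpr ⟨Finset.mem_product.mpr ⟨htIcc, ?_⟩, ?_⟩
      · show (m - j) / r ∈ Finset.range (n + 1)
        rw [Finset.mem_range, hdiv m hmod]
        omega
      · show t * j + t * r * ((m - j) / r) ≤ n
        rw [hdiv m hmod, show t * j + t * r * (m / r) = m * t from by
          conv_rhs => rw [← h1]
          ring]
        exact hval
    · rintro ⟨i, s⟩ hp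
      have hmem := (Finset.mem_filter.mp hp).1
      have hval : i * j + i * r * s ≤ n := (Finset.mem_filter.mp hp).2
      have hiIcc : i ∈ Finset.Icc 1 n := (Finset.mem_product.mp hmem).1
      have hi := Finset.mem_Icc.mp hiIcc
      have hle : j + r * s ≤ n := by
        calc j + r * s = 1 * (j + r * s) := (one_mul _).symm
          _ ≤ i * (j + r * s) := Nat.mul_le_mul_right _ hi.1
          _ = i * j + i * r * s := by ring
          _ ≤ n := hval
      have hmod : (j + r * s) % r = j := by
        rw [Nat.add_mul_mod_self_left, Nat.mod_eq_of_lt hjrlt]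
      refine Finset.mem_filter.mpr ⟨Finset.mem_product.mpr ⟨?_, hiIcc⟩, ?_⟩
      · exact Finset.mem_filter.mpr
          ⟨Finset.mem_Icc.mpr ⟨Nat.le_trans hj (Nat.le_add_right _ _), hle⟩, hmod⟩
      · show (j + r * s) * i ≤ n
        rw [show (j + r * s) * i = i * j + i * r * s from by ring]
        exact hval
    · rintro ⟨m, t⟩ hp
      have hmem := (Finset.mem_filter.mp hp).1
      have hmmem := (Finset.mem_product.mp hmem).1
      have hmod : m % r = j := (Finset.mem_filter.mp hmmem).2
      have h1 := hdec m hmod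
      show (j + r * ((m - j) / r), t) = (m, t)
      rw [hdiv m hmod]
      exact Prod.ext (by rw [Nat.add_comm]; exact h1) rfl
    · rintro ⟨i, s⟩ hp
      show (i, (j + r * s - j) / r) = (i, s)
      rw [Nat.add_sub_cancel_left, Nat.mul_div_cancel_left _ (by omega : 0 < r)]
    · rintro ⟨m, t⟩ hp
      have hmem := (Finset.mem_filter.mp hp).1
      have hmmem := (Finset.mem_product.mp hmem).1
      have hmod : m % r = j := (Finset.mem_filter.mp hmmem).2
      have h1 := hdec m hmod
      show g (m * t) = g (t * j + t * r * ((m - j) / r))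
      rw [hdiv m hmod]
      congr 1
      conv_lhs => rw [← h1]
      ring
  rw [main]
  simp only [Finset.sum_sub_distrib]
  rw [hcancel]
  ring

end Main

/-- `X_{r,j,n} - Y_{r,j,n} = c_{r,n}` for every `j ∈ {1, …, r-1}`. -/
theorem X_sub_Y_eq_c (r j n : ℕ) (hr : 2 ≤ r) (hj : 1 ≤ j) (hjr : j ≤ r - 1) :
    (Xrjn r j n : ℚ) - Yrjn r j n = cCoeff r n := by
  have hg : ∀ b, n < b →
      (PowerSeries.coeff (R := ℚ) n) (Phi r n * (PowerSeries.X : PowerSeries ℚ) ^ b) = 0 := by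
    intro b hb
    rw [PowerSeries.coeff_mul_X_pow', if_neg (by omega)]
  have key := final_count r j n hr hj hjr
    (fun b => PowerSeries.coeff (R := ℚ) n (Phi r n * (PowerSeries.X : PowerSeries ℚ) ^ b)) hg
  rw [X_eq r j n hr hj, Y_eq r j n hr hj hjr, c_eq r n hr, key]
  ring
end

section
/- For r ≥ 2 and j with 1 ≤ j ≤ r-1, the generating function Σ_n X_{r,j,n} q^n equals Φ_r(q) · Σ_{k ≥ 0} q^{rk+j}/(1 - q^{rk+j}), where X_{r,j,n} counts, over all partitions of n with no part divisible by r, the total number of parts congruent to j mod r. -/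
open Nat Finset PowerSeries
open scoped Classical

/-- Truncation of `Φ_r(q) = ∏_{k ≥ 1, r ∤ k} (1 - q^k)⁻¹` at `k ≤ N`. -/
noncomputable def PhiTrunc (r N : ℕ) : PowerSeries ℚ :=
  ∏ k ∈ Finset.Icc 1 N, if ¬ r ∣ k then (1 - (PowerSeries.X : PowerSeries ℚ) ^ k)⁻¹ else 1

namespace GenFunAux

noncomputable section

variable {α : Type*}

/-- A convenience constructor for the power series whose coefficients indicate a subset. -/
def indicatorSeries (α : Type*) [Semiring α] (s : Set ℕ) : PowerSeries α :=
  PowerSeries.mk fun n => if n ∈ s then 1 else 0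

theorem coeff_indicator (s : Set ℕ) [Semiring α] (n : ℕ) :
    coeff (R := α) n (indicatorSeries _ s) = if n ∈ s then 1 else 0 :=
  coeff_mk _ _

theorem coeff_indicator_pos (s : Set ℕ) [Semiring α] (n : ℕ) (h : n ∈ s) :
    coeff (R := α) n (indicatorSeries _ s) = 1 := by rw [coeff_indicator, if_pos h]

theorem coeff_indicator_neg (s : Set ℕ) [Semiring α] (n : ℕ) (h : n ∉ s) :
    coeff (R := α) n (indicatorSeries _ s) = 0 := by rw [coeff_indicator, if_neg h]

theorem constantCoeff_indicator (s : Set ℕ) [Semiring α] :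
    constantCoeff (R := α) (indicatorSeries _ s) = if 0 ∈ s then 1 else 0 :=
  rfl

theorem num_series' [Field α] (i : ℕ) :
    (1 - (X : PowerSeries α) ^ (i + 1))⁻¹ = indicatorSeries α {k | i + 1 ∣ k} := by
  rw [PowerSeries.inv_eq_iff_mul_eq_one]
  · ext n
    cases n with
    | zero => simp [mul_sub, zero_pow, constantCoeff_indicator]
    | succ n =>
      simp only [coeff_one, if_false, mul_sub, mul_one, coeff_indicator,
        LinearMap.map_sub, reduceCtorEq]
      simp_rw [coeff_mul, coeff_X_pow, coeff_indicator, @boole_mul _ _ _ _]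
      erw [@sum_ite _ _ _ _ _ (fun _ => Classical.propDecidable _), sum_ite]
      simp_rw [@filter_filter _ _ _ _ _, sum_const_zero, add_zero, sum_const, nsmul_eq_mul, mul_one,
        sub_eq_iff_eq_add, zero_add]
      symm
      split_ifs with h
      · suffices #{a ∈ antidiagonal (n + 1) | i + 1 ∣ a.fst ∧ a.snd = i + 1} = 1 by
          simp only [Set.mem_setOf_eq]; convert congr_arg ((↑) : ℕ → α) this; norm_cast
        rw [Finset.card_eq_one]
        cases' h with p hp
        refine ⟨((i + 1) * (p - 1), i + 1), ?_⟩
        ext ⟨a₁, a₂⟩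
        simp only [mem_filter, Prod.mk_inj, HasAntidiagonal.mem_antidiagonal, mem_singleton]
        constructor
        · rintro ⟨a_left, ⟨a, rfl⟩, rfl⟩
          refine ⟨?_, rfl⟩
          rw [Nat.mul_sub_left_distrib, ← hp, ← a_left, mul_one, Nat.add_sub_cancel]
        · rintro ⟨rfl, rfl⟩
          match p with
          | 0 => rw [mul_zero] at hp; cases hp
          | p + 1 => rw [hp]; simp [mul_add]
      · suffices #{a ∈ antidiagonal (n + 1) | i + 1 ∣ a.fst ∧ a.snd = i + 1} = 0 by
          simp only [Set.mem_setOf_eq]; convert congr_arg ((↑) : ℕ → α) this; norm_cast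
        rw [Finset.card_eq_zero]
        apply eq_empty_of_forall_notMem
        simp only [Prod.forall, mem_filter, not_and, HasAntidiagonal.mem_antidiagonal]
        rintro _ h₁ h₂ ⟨a, rfl⟩ rfl
        apply h
        simp [← h₂]
  · simp [zero_pow]

-- The main workhorse of the partition theorem proof.
theorem partialGF_prop (α : Type*) [CommSemiring α] (n : ℕ) (s : Finset ℕ) (hs : ∀ i ∈ s, 0 < i)
    (c : ℕ → Set ℕ) (hc : ∀ i, i ∉ s → 0 ∈ c i) :
    #{p : n.Partition | (∀ j, p.parts.count j ∈ c j) ∧ ∀ j ∈ p.parts, j ∈ s} =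
      coeff (R := α) n (∏ i ∈ s, indicatorSeries α ((· * i) '' c i)) := by
  simp_rw [coeff_prod, coeff_indicator, prod_boole, sum_boole]
  apply congr_arg
  simp only [mem_univ, forall_true_left, not_and, not_forall, exists_prop,
    Set.mem_image, not_exists]
  set PHIMAP : (a : Nat.Partition n) →
    a ∈ filter (fun p ↦ (∀ (j : ℕ), Multiset.count j p.parts ∈ c j) ∧ ∀ j ∈ p.parts, j ∈ s) univ →
    ℕ →₀ ℕ := fun p _ => {
      toFun := fun i => Multiset.count i p.parts • i
      support := Finset.filter (fun i => i ≠ 0) p.parts.toFinset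
      mem_support_toFun := fun a => by
        simp only [smul_eq_mul, ne_eq, mul_eq_zero, Multiset.count_eq_zero]
        rw [not_or, not_not]
        simp only [Multiset.mem_toFinset, not_not, mem_filter] }
  refine Finset.card_bij PHIMAP ?_ ?_ ?_
  · intro a ha
    simp only [PHIMAP, not_forall, not_exists, not_and, exists_prop, mem_filter]
    rw [mem_finsuppAntidiag]
    dsimp only [ne_eq, smul_eq_mul, id_eq, eq_mpr_eq_cast, le_eq_subset, Finsupp.coe_mk]
    simp only [mem_univ, forall_true_left, not_and, not_forall, exists_prop,
      mem_filter, true_and] at ha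
    refine ⟨⟨?_, fun i ↦ ?_⟩, fun i _ ↦ ⟨a.parts.count i, ha.1 i, rfl⟩⟩
    · conv_rhs => simp [← a.parts_sum]
      rw [sum_multiset_count_of_subset _ s]
      · simp only [smul_eq_mul]
      · intro i
        simp only [Multiset.mem_toFinset, not_not, mem_filter]
        apply ha.2
    · simp only [ne_eq, Multiset.mem_toFinset, not_not, mem_filter, and_imp]
      exact fun hi _ ↦ ha.2 i hi
  · intro p₁ hp₁ p₂ hp₂ h
    apply Nat.Partition.ext
    simp only [true_and, mem_univ, mem_filter] at hp₁ hp₂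
    ext i
    simp only [PHIMAP, ne_eq, Multiset.mem_toFinset, not_not, smul_eq_mul, Finsupp.mk.injEq] at h
    by_cases hi : i = 0
    · rw [hi]
      rw [Multiset.count_eq_zero_of_notMem]
      · rw [Multiset.count_eq_zero_of_notMem]
        intro a; exact Nat.lt_irrefl 0 (hs 0 (hp₂.2 0 a))
      intro a; exact Nat.lt_irrefl 0 (hs 0 (hp₁.2 0 a))
    · rw [← mul_left_inj' hi]
      rw [funext_iff] at h
      exact h.2 i
  · simp only [PHIMAP, mem_filter, mem_finsuppAntidiag, mem_univ, exists_prop, true_and, and_assoc]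
    rintro f ⟨hf, hf₃, hf₄⟩
    have hf' : f ∈ finsuppAntidiag s n := mem_finsuppAntidiag.mpr ⟨hf, hf₃⟩
    simp only [mem_finsuppAntidiag] at hf'
    refine ⟨⟨∑ i ∈ s, Multiset.replicate (f i / i) i, ?_, ?_⟩, ?_, ?_, ?_⟩
    · intro i hi
      simp only [exists_prop, Multiset.mem_sum, mem_map, Function.Embedding.coeFn_mk] at hi
      rcases hi with ⟨t, ht, z⟩
      apply hs
      rwa [Multiset.eq_of_mem_replicate z]
    · simp_rw [Multiset.sum_sum, Multiset.sum_replicate, Nat.nsmul_eq_mul]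
      rw [← hf'.1]
      refine sum_congr rfl fun i hi => Nat.div_mul_cancel ?_
      rcases hf₄ i hi with ⟨w, _, hw₂⟩
      rw [← hw₂]
      exact dvd_mul_left _ _
    · intro i
      simp_rw [Multiset.count_sum', Multiset.count_replicate, sum_ite_eq']
      split_ifs with h
      · rcases hf₄ i h with ⟨w, hw₁, hw₂⟩
        rwa [← hw₂, Nat.mul_div_cancel _ (hs i h)]
      · exact hc _ h
    · intro i hi
      rw [Multiset.mem_sum] at hi
      rcases hi with ⟨j, hj₁, hj₂⟩
      rwa [Multiset.eq_of_mem_replicate hj₂]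
    · ext i
      simp_rw [Multiset.count_sum', Multiset.count_replicate, sum_ite_eq']
      simp only [ne_eq, Multiset.mem_toFinset, not_not, smul_eq_mul, ite_mul,
        zero_mul, Finsupp.coe_mk]
      split_ifs with h
      · apply Nat.div_mul_cancel
        rcases hf₄ i h with ⟨w, _, hw₂⟩
        apply Dvd.intro_left _ hw₂
      · apply symm
        rw [← Finsupp.notMem_support_iff]
        exact notMem_mono hf'.2 h


theorem num_series'' (i : ℕ) (hi : 0 < i) :
    (1 - (X : PowerSeries ℚ) ^ i)⁻¹ = indicatorSeries ℚ {k | i ∣ k} := by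
  have h := num_series' (α := ℚ) (i - 1)
  have h2 : i - 1 + 1 = i := by omega
  rwa [h2] at h

/-- Coefficients of the truncated product count class-regular partitions. -/
theorem coeff_PhiTrunc (r N d : ℕ) (hd : d ≤ N) :
    (PowerSeries.coeff (R := ℚ) d) (PhiTrunc r N) = ((CP r d).card : ℚ) := by
  have h := partialGF_prop ℚ d ((Finset.Icc 1 N).filter (fun k => ¬ r ∣ k))
      (fun i hi => (Finset.mem_Icc.mp (Finset.mem_filter.mp hi).1).1)
      (fun _ => Set.univ) (fun _ _ => trivial)
  have hprod : ∏ i ∈ (Finset.Icc 1 N).filter (fun k => ¬ r ∣ k),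
      indicatorSeries ℚ ((· * i) '' Set.univ)
      = ∏ i ∈ (Finset.Icc 1 N).filter (fun k => ¬ r ∣ k),
        (1 - (X : PowerSeries ℚ) ^ i)⁻¹ := by
    apply Finset.prod_congr rfl
    intro i hi
    have h1 : 1 ≤ i := (Finset.mem_Icc.mp (Finset.mem_filter.mp hi).1).1
    have hset : ((· * i) '' Set.univ) = {k : ℕ | i ∣ k} := by
      ext x
      constructor
      · rintro ⟨a, -, rfl⟩; exact Dvd.intro_left a rfl
      · rintro ⟨c, rfl⟩; exact ⟨c, trivial, mul_comm c i ▸ rfl⟩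
    rw [num_series'' i h1, hset]
  have hcard : Finset.filter (fun p : d.Partition =>
      (∀ j, p.parts.count j ∈ (Set.univ : Set ℕ)) ∧
        ∀ j ∈ p.parts, j ∈ (Finset.Icc 1 N).filter (fun k => ¬ r ∣ k)) Finset.univ
      = CP r d := by
    ext p
    simp only [CP, Finset.mem_filter, Finset.mem_univ, true_and, Set.mem_univ, forall_const,
      Finset.mem_Icc]
    constructor
    · intro h q hq
      exact (h q hq).2
    · intro h q hq
      refine ⟨⟨p.parts_pos hq, ?_⟩, h q hq⟩
      have hq' : q ≤ d := by
        have := Multiset.single_le_sum (fun _ _ => Nat.zero_le _) q hq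
        rwa [p.parts_sum] at this
      exact le_trans hq' hd
  rw [PhiTrunc, ← Finset.prod_filter, ← hprod, ← h, hcard]

/-- Adding `t` copies of a part `m` to a partition of `n - t * m`. -/
def addRep (n m t : ℕ) (hm : 0 < m) (htm : t * m ≤ n) (σ : (n - t * m).Partition) :
    n.Partition where
  parts := σ.parts + Multiset.replicate t m
  parts_pos := by
    intro q hq
    rcases Multiset.mem_add.mp hq with h | h
    · exact σ.parts_pos h
    · rw [Multiset.eq_of_mem_replicate h]; exact hm
  parts_sum := by
    rw [Multiset.sum_add, σ.parts_sum, Multiset.sum_replicate, smul_eq_mul,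
      Nat.sub_add_cancel htm]

theorem card_filter_count (r n m t : ℕ) (hm : ¬ r ∣ m) (hmpos : 0 < m) (htm : t * m ≤ n) :
    ((CP r n).filter (fun ρ => t ≤ ρ.parts.count m)).card = (CP r (n - t * m)).card := by
  symm
  refine Finset.card_bij (fun σ _ => addRep n m t hmpos htm σ) ?_ ?_ ?_
  · intro σ hσ
    simp only [CP, Finset.mem_filter, Finset.mem_univ, true_and] at hσ ⊢
    constructor
    · intro p hp
      rcases Multiset.mem_add.mp hp with h | h
      · exact hσ p h
      · rw [Multiset.eq_of_mem_replicate h]; exact hm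
    · show t ≤ Multiset.count m (σ.parts + Multiset.replicate t m)
      rw [Multiset.count_add, Multiset.count_replicate_self]
      omega
  · intro σ₁ _ σ₂ _ h
    have := congr_arg Nat.Partition.parts h
    simp only [addRep] at this
    exact Nat.Partition.ext (add_right_cancel this)
  · intro ρ hρ
    simp only [CP, Finset.mem_filter, Finset.mem_univ, true_and] at hρ
    obtain ⟨hreg, hcount⟩ := hρ
    have hrep : Multiset.replicate t m ≤ ρ.parts :=
      Multiset.le_count_iff_replicate_le.mp hcount
    have hsub : (ρ.parts - Multiset.replicate t m) + Multiset.replicate t m = ρ.parts :=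
      tsub_add_cancel_of_le hrep
    refine ⟨⟨ρ.parts - Multiset.replicate t m, ?_, ?_⟩, ?_, ?_⟩
    · intro q hq
      exact ρ.parts_pos (Multiset.mem_of_le (Multiset.sub_le_self _ _) hq)
    · have := congr_arg Multiset.sum hsub
      rw [Multiset.sum_add, ρ.parts_sum, Multiset.sum_replicate, smul_eq_mul] at this
      omega
    · simp only [CP, Finset.mem_filter, Finset.mem_univ, true_and]
      intro p hp
      exact hreg p (Multiset.mem_of_le (Multiset.sub_le_self _ _) hp)
    · exact Nat.Partition.ext hsub

theorem count_mul_le_sum (s : Multiset ℕ) (m : ℕ) : s.count m * m ≤ s.sum := by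
  have hrep : Multiset.replicate (s.count m) m ≤ s :=
    Multiset.le_count_iff_replicate_le.mp le_rfl
  clear hrep
  induction s using Multiset.induction with
  | empty => simp
  | cons a s ih =>
    rw [Multiset.count_cons, Multiset.sum_cons]
    by_cases h : m = a
    · subst h
      rw [if_pos rfl, add_mul, one_mul]
      omega
    · rw [if_neg h, add_zero]
      omega

theorem filter_count_empty (r n m t : ℕ) (ht : 0 < t) (htm : n < t * m) :
    ((CP r n).filter (fun ρ => t ≤ ρ.parts.count m)) = ∅ := by
  apply Finset.eq_empty_of_forall_notMem
  intro ρ hρ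
  simp only [Finset.mem_filter] at hρ
  have h1 := count_mul_le_sum ρ.parts m
  rw [ρ.parts_sum] at h1
  have h2 : t * m ≤ ρ.parts.count m * m := Nat.mul_le_mul_right m hρ.2
  omega

/-- `X^m / (1 - X^m)` is the indicator of positive multiples of `m`. -/
theorem geom_indicator (m : ℕ) (hm : 0 < m) :
    (X : PowerSeries ℚ) ^ m * (1 - (X : PowerSeries ℚ) ^ m)⁻¹ =
      indicatorSeries ℚ {d | m ∣ d ∧ d ≠ 0} := by
  rw [num_series'' m hm]
  ext b
  rcases lt_or_ge b m with hb | hb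
  · rw [coeff_indicator_neg]
    · rw [PowerSeries.coeff_X_pow_mul']
      simp [Nat.not_le.mpr hb]
    · rintro ⟨⟨c, rfl⟩, hb0⟩
      rcases Nat.eq_zero_or_pos c with rfl | hc
      · simp at hb0
      · have : m ≤ m * c := Nat.le_mul_of_pos_right m hc
        omega
  · obtain ⟨d, rfl⟩ : ∃ d, b = d + m := ⟨b - m, by omega⟩
    rw [PowerSeries.coeff_X_pow_mul, coeff_indicator, coeff_indicator]
    have h1 : (m ∣ d) ↔ (m ∣ d + m ∧ d + m ≠ 0) := by
      constructor
      · intro h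
        exact ⟨Dvd.dvd.add h dvd_rfl, by omega⟩
      · rintro ⟨h, -⟩
        exact (Nat.dvd_add_self_right).mp h
    simp only [Set.mem_setOf_eq]
    by_cases h : m ∣ d
    · rw [if_pos h, if_pos (h1.mp h)]
    · rw [if_neg h, if_neg (fun hc => h (h1.mpr hc))]

theorem coeff_mul_geom (F : PowerSeries ℚ) (m n : ℕ) (hm : 0 < m) :
    (PowerSeries.coeff (R := ℚ) n) (F * ((X : PowerSeries ℚ) ^ m *
        (1 - (X : PowerSeries ℚ) ^ m)⁻¹)) =
      ∑ t ∈ Finset.Icc 1 n, if t * m ≤ n then (PowerSeries.coeff (R := ℚ) (n - t * m)) F else 0 := by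
  rw [geom_indicator m hm, PowerSeries.coeff_mul,
    Finset.Nat.sum_antidiagonal_eq_sum_range_succ
      (fun a b => (PowerSeries.coeff (R := ℚ) a) F *
        (PowerSeries.coeff (R := ℚ) b) (indicatorSeries ℚ {d | m ∣ d ∧ d ≠ 0}))]
  simp only [Nat.succ_eq_add_one]
  have step1 : ∀ i ∈ Finset.range (n + 1),
      (PowerSeries.coeff (R := ℚ) i) F *
        (PowerSeries.coeff (R := ℚ) (n - i)) (indicatorSeries ℚ {d | m ∣ d ∧ d ≠ 0}) =
      (if m ∣ n - i ∧ n - i ≠ 0 then (PowerSeries.coeff (R := ℚ) i) F else 0) := by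
    intro i _
    rw [coeff_indicator]
    simp only [Set.mem_setOf_eq]
    split_ifs with h
    · rw [mul_one]
    · rw [mul_zero]
  rw [Finset.sum_congr rfl step1, ← Finset.sum_filter, ← Finset.sum_filter]
  refine Finset.sum_nbij' (fun i => (n - i) / m) (fun t => n - t * m) ?_ ?_ ?_ ?_ ?_
  · intro a ha
    simp only [Finset.mem_filter, Finset.mem_range, Finset.mem_Icc] at ha ⊢
    obtain ⟨han, ⟨c, hc⟩, ha0⟩ := ha
    rw [hc, Nat.mul_div_cancel_left c hm]
    have hc1 : 1 ≤ c := by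
      rcases Nat.eq_zero_or_pos c with rfl | h
      · omega
      · exact h
    have hcm : c ≤ m * c := Nat.le_mul_of_pos_left c hm
    refine ⟨⟨hc1, by omega⟩, by rw [mul_comm]; omega⟩
  · intro t ht
    simp only [Finset.mem_filter, Finset.mem_range, Finset.mem_Icc] at ht ⊢
    obtain ⟨⟨ht1, htn⟩, htm⟩ := ht
    have h1 : n - (n - t * m) = t * m := by omega
    rw [h1]
    refine ⟨by omega, ⟨t, mul_comm t m⟩, by positivity⟩
  · intro a ha
    simp only [Finset.mem_filter, Finset.mem_range] at ha
    obtain ⟨han, ⟨c, hc⟩, ha0⟩ := ha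
    show n - (n - a) / m * m = a
    rw [hc, Nat.mul_div_cancel_left c hm, mul_comm c m, ← hc]
    omega
  · intro t ht
    simp only [Finset.mem_filter, Finset.mem_Icc] at ht
    obtain ⟨⟨ht1, htn⟩, htm⟩ := ht
    show (n - (n - t * m)) / m = t
    have h1 : n - (n - t * m) = t * m := by omega
    rw [h1, Nat.mul_div_cancel t hm]
  · intro a ha
    simp only [Finset.mem_filter, Finset.mem_range] at ha
    obtain ⟨han, ⟨c, hc⟩, ha0⟩ := ha
    show (PowerSeries.coeff (R := ℚ) a) F = (PowerSeries.coeff (R := ℚ) (n - (n - a) / m * m)) F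
    have h3 : n - (n - a) / m * m = a := by
      rw [Nat.div_mul_cancel ⟨c, hc⟩]
      omega
    rw [h3]

theorem card_sum_count (n : ℕ) (s : Multiset ℕ) (hs : ∀ x ∈ s, x ≤ n) :
    Multiset.card s = ∑ m ∈ Finset.range (n + 1), s.count m := by
  rw [← Multiset.toFinset_sum_count_eq]
  apply Finset.sum_subset
  · intro x hx
    rw [Multiset.mem_toFinset] at hx
    rw [Finset.mem_range]
    exact Nat.lt_succ_of_le (hs x hx)
  · intro x _ hx
    rw [Multiset.mem_toFinset] at hx
    exact Multiset.count_eq_zero_of_notMem hx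

theorem Xrjn_eq (r j n : ℕ) (hj : 1 ≤ j) (hjr : j < r) :
    Xrjn r j n = ∑ k ∈ Finset.range (n + 1), ∑ t ∈ Finset.Icc 1 n,
      ((CP r n).filter (fun ρ => t ≤ ρ.parts.count (r * k + j))).card := by
  rw [Xrjn]
  have key : ∀ ρ ∈ CP r n,
      Multiset.card (ρ.parts.filter (fun p => p % r = j)) =
      ∑ k ∈ Finset.range (n + 1), ∑ t ∈ Finset.Icc 1 n,
        (if t ≤ ρ.parts.count (r * k + j) then 1 else 0) := by
    intro ρ _
    have hple : ∀ x ∈ ρ.parts, x ≤ n := by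
      intro x hx
      have := Multiset.single_le_sum (fun _ _ => Nat.zero_le _) x hx
      rwa [ρ.parts_sum] at this
    have h1 : Multiset.card (ρ.parts.filter (fun p => p % r = j)) =
        ∑ m ∈ Finset.range (n + 1), (ρ.parts.filter (fun p => p % r = j)).count m := by
      apply card_sum_count
      intro x hx
      exact hple x (Multiset.mem_of_le (Multiset.filter_le _ _) hx)
    rw [h1]
    have h2 : ∀ m ∈ Finset.range (n + 1),
        (ρ.parts.filter (fun p => p % r = j)).count m =
        if m % r = j then ρ.parts.count m else 0 := fun m _ => Multiset.count_filter
    rw [Finset.sum_congr rfl h2]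
    have h3 : ∑ m ∈ Finset.range (n + 1), (if m % r = j then ρ.parts.count m else 0) =
        ∑ k ∈ Finset.range (n + 1), ρ.parts.count (r * k + j) := by
      rw [← Finset.sum_filter]
      have h4 : ∑ k ∈ Finset.range (n + 1), ρ.parts.count (r * k + j) =
          ∑ k ∈ (Finset.range (n + 1)).filter (fun k => r * k + j ≤ n),
            ρ.parts.count (r * k + j) := by
        symm
        apply Finset.sum_subset (Finset.filter_subset _ _)
        intro k hk hk'
        simp only [Finset.mem_filter, Finset.mem_range, not_and, not_le] at hk'
        rw [Finset.mem_range] at hk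
        apply Multiset.count_eq_zero_of_notMem
        intro hmem
        have := hple _ hmem
        omega
      rw [h4]
      refine Finset.sum_nbij' (fun m => m / r) (fun k => r * k + j) ?_ ?_ ?_ ?_ ?_
      · intro m hm
        simp only [Finset.mem_filter, Finset.mem_range] at hm ⊢
        obtain ⟨hmn, hmr⟩ := hm
        have hd : r * (m / r) + j = m := by
          conv_rhs => rw [← Nat.div_add_mod m r, hmr]
        have : m / r ≤ m := Nat.div_le_self m r
        exact ⟨by omega, by omega⟩
      · intro k hk
        simp only [Finset.mem_filter, Finset.mem_range] at hk ⊢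
        refine ⟨by omega, ?_⟩
        rw [Nat.mul_add_mod, Nat.mod_eq_of_lt hjr]
      · intro m hm
        simp only [Finset.mem_filter, Finset.mem_range] at hm
        show r * (m / r) + j = m
        conv_lhs => rw [← hm.2]
        exact Nat.div_add_mod m r
      · intro k hk
        show (r * k + j) / r = k
        rw [Nat.mul_add_div (by omega : 0 < r), Nat.div_eq_of_lt hjr, add_zero]
      · intro m hm
        simp only [Finset.mem_filter, Finset.mem_range] at hm
        show Multiset.count m ρ.parts = Multiset.count (r * (m / r) + j) ρ.parts
        congr 1
        conv_rhs => rw [← hm.2]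
        exact (Nat.div_add_mod m r).symm
    rw [h3]
    apply Finset.sum_congr rfl
    intro k _
    set c := ρ.parts.count (r * k + j) with hc
    have hcle : c ≤ n := by
      have h5 := count_mul_le_sum ρ.parts (r * k + j)
      rw [ρ.parts_sum] at h5
      have h6 : c ≤ c * (r * k + j) := Nat.le_mul_of_pos_right c (by omega)
      rw [← hc] at h5
      omega
    have hfilter : (Finset.Icc 1 n).filter (fun t => t ≤ c) = Finset.Icc 1 c := by
      ext t
      simp only [Finset.mem_filter, Finset.mem_Icc]
      omega
    rw [← Finset.card_filter, hfilter, Nat.card_Icc]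
    omega
  rw [Finset.sum_congr rfl key, Finset.sum_comm]
  apply Finset.sum_congr rfl
  intro k _
  rw [Finset.sum_comm]
  apply Finset.sum_congr rfl
  intro t _
  rw [Finset.card_filter]

end

end GenFunAux

open GenFunAux in
/-- `Σ_n X_{r,j,n} q^n = Φ_r(q) · Σ_{k ≥ 0} q^{rk+j}/(1-q^{rk+j})`, stated coefficient-wise
(the sum over `k` is truncated at `k ≤ n`, which does not change the `n`-th coefficient). -/
theorem genFun_X (r j : ℕ) (hr : 2 ≤ r) (hj : 1 ≤ j) (hjr : j ≤ r - 1) (n : ℕ) :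
    PowerSeries.coeff (R := ℚ) n
      (PhiTrunc r n * ∑ k ∈ Finset.range (n + 1),
        (PowerSeries.X : PowerSeries ℚ) ^ (r * k + j) *
          (1 - (PowerSeries.X : PowerSeries ℚ) ^ (r * k + j))⁻¹) = Xrjn r j n := by
  have hjr' : j < r := by omega
  rw [Finset.mul_sum, map_sum]
  have hterm : ∀ k ∈ Finset.range (n + 1),
      (PowerSeries.coeff (R := ℚ) n) (PhiTrunc r n * ((X : PowerSeries ℚ) ^ (r * k + j) *
        (1 - (X : PowerSeries ℚ) ^ (r * k + j))⁻¹)) =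
      ∑ t ∈ Finset.Icc 1 n,
        (((CP r n).filter (fun ρ => t ≤ ρ.parts.count (r * k + j))).card : ℚ) := by
    intro k _
    set m := r * k + j with hm
    have hmpos : 0 < m := by omega
    have hrm : ¬ r ∣ m := by
      intro hdvd
      have h2 : m % r = 0 := Nat.mod_eq_zero_of_dvd hdvd
      rw [hm, Nat.mul_add_mod, Nat.mod_eq_of_lt hjr'] at h2
      omega
    rw [coeff_mul_geom _ m n hmpos]
    apply Finset.sum_congr rfl
    intro t ht
    rw [Finset.mem_Icc] at ht
    by_cases htm : t * m ≤ n
    · rw [if_pos htm, coeff_PhiTrunc r n (n - t * m) (by omega),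
        card_filter_count r n m t hrm hmpos htm]
    · rw [if_neg htm, filter_count_empty r n m t (by omega) (by omega)]
      simp
  rw [Finset.sum_congr rfl hterm, Xrjn_eq r j n hj hjr']
  push_cast
  rfl
end

section
/- For r ≥ 2 and 1 ≤ j ≤ r-1, the generating function Σ_n Y_{r,j,n} q^n equals Φ_r(q) · Σ_{k ≥ 1} (q^{jk} - q^{rk})/(1 - q^{rk}), where Y_{r,j,n} is the total number of part-sizes with multiplicity at least j, summed over all r-regular partitions of n. -/
open Nat Finset PowerSeries
open scoped Classical

open Finset.HasAntidiagonal

namespace GenY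
variable {α : Type*}

noncomputable section
variable {α : Type*}

def indicatorSeries (α : Type*) [Semiring α] (s : Set ℕ) : PowerSeries α :=
  PowerSeries.mk fun n => if n ∈ s then 1 else 0

theorem coeff_indicator (s : Set ℕ) [Semiring α] (n : ℕ) :
    coeff (R := α) n (indicatorSeries _ s) = if n ∈ s then 1 else 0 :=
  coeff_mk _ _

theorem coeff_indicator_pos (s : Set ℕ) [Semiring α] (n : ℕ) (h : n ∈ s) :
    coeff (R := α) n (indicatorSeries _ s) = 1 := by rw [coeff_indicator, if_pos h]

theorem coeff_indicator_neg (s : Set ℕ) [Semiring α] (n : ℕ) (h : n ∉ s) :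
    coeff (R := α) n (indicatorSeries _ s) = 0 := by rw [coeff_indicator, if_neg h]

theorem constantCoeff_indicator (s : Set ℕ) [Semiring α] :
    constantCoeff (R := α) (indicatorSeries _ s) = if 0 ∈ s then 1 else 0 :=
  rfl

theorem partialGF_prop (α : Type*) [CommSemiring α] (n : ℕ) (s : Finset ℕ) (hs : ∀ i ∈ s, 0 < i)
    (c : ℕ → Set ℕ) (hc : ∀ i, i ∉ s → 0 ∈ c i) :
    #{p : n.Partition | (∀ j, p.parts.count j ∈ c j) ∧ ∀ j ∈ p.parts, j ∈ s} =
      coeff (R := α) n (∏ i ∈ s, indicatorSeries α ((· * i) '' c i)) := by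
  simp_rw [coeff_prod, coeff_indicator, prod_boole, sum_boole]
  apply congr_arg
  simp only [mem_univ, forall_true_left, not_and, not_forall, exists_prop,
    Set.mem_image, not_exists]
  set phim : (a : Nat.Partition n) →
    a ∈ filter (fun p ↦ (∀ (j : ℕ), Multiset.count j p.parts ∈ c j) ∧ ∀ j ∈ p.parts, j ∈ s) univ →
    ℕ →₀ ℕ := fun p _ => {
      toFun := fun i => Multiset.count i p.parts • i
      support := Finset.filter (fun i => i ≠ 0) p.parts.toFinset
      mem_support_toFun := fun a => by
        simp only [smul_eq_mul, ne_eq, mul_eq_zero, Multiset.count_eq_zero]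
        rw [not_or, not_not]
        simp only [Multiset.mem_toFinset, not_not, mem_filter] }
  refine Finset.card_bij phim ?_ ?_ ?_
  · intro a ha
    simp only [phim, not_forall, not_exists, not_and, exists_prop, mem_filter]
    rw [mem_finsuppAntidiag]
    dsimp only [ne_eq, smul_eq_mul, id_eq, eq_mpr_eq_cast, le_eq_subset, Finsupp.coe_mk]
    simp only [mem_univ, forall_true_left, not_and, not_forall, exists_prop,
      mem_filter, true_and] at ha
    refine ⟨⟨?_, fun i ↦ ?_⟩, fun i _ ↦ ⟨a.parts.count i, ha.1 i, rfl⟩⟩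
    · conv_rhs => simp [← a.parts_sum]
      rw [sum_multiset_count_of_subset _ s]
      · simp only [smul_eq_mul]
      · intro i
        simp only [Multiset.mem_toFinset, not_not, mem_filter]
        apply ha.2
    · simp only [ne_eq, Multiset.mem_toFinset, not_not, mem_filter, and_imp]
      exact fun hi _ ↦ ha.2 i hi
  · intro p₁ hp₁ p₂ hp₂ h
    apply Nat.Partition.ext
    simp only [true_and, mem_univ, mem_filter] at hp₁ hp₂
    ext i
    simp only [phim, ne_eq, Multiset.mem_toFinset, not_not, smul_eq_mul, Finsupp.mk.injEq] at h
    by_cases hi : i = 0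
    · rw [hi]
      rw [Multiset.count_eq_zero_of_notMem]
      · rw [Multiset.count_eq_zero_of_notMem]
        intro a; exact Nat.lt_irrefl 0 (hs 0 (hp₂.2 0 a))
      intro a; exact Nat.lt_irrefl 0 (hs 0 (hp₁.2 0 a))
    · rw [← mul_left_inj' hi]
      rw [funext_iff] at h
      exact h.2 i
  · simp only [phim, mem_filter, mem_finsuppAntidiag, mem_univ, exists_prop, true_and, and_assoc]
    rintro f ⟨hf, hf₃, hf₄⟩
    have hf' : f ∈ finsuppAntidiag s n := mem_finsuppAntidiag.mpr ⟨hf, hf₃⟩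
    simp only [mem_finsuppAntidiag] at hf'
    refine ⟨⟨∑ i ∈ s, Multiset.replicate (f i / i) i, ?_, ?_⟩, ?_, ?_, ?_⟩
    · intro i hi
      simp only [exists_prop, Multiset.mem_sum, mem_map, Function.Embedding.coeFn_mk] at hi
      rcases hi with ⟨t, ht, z⟩
      apply hs
      rwa [Multiset.eq_of_mem_replicate z]
    · simp_rw [Multiset.sum_sum, Multiset.sum_replicate, Nat.nsmul_eq_mul]
      rw [← hf'.1]
      refine sum_congr rfl fun i hi => Nat.div_mul_cancel ?_
      rcases hf₄ i hi with ⟨w, _, hw₂⟩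
      rw [← hw₂]
      exact dvd_mul_left _ _
    · intro i
      simp_rw [Multiset.count_sum', Multiset.count_replicate, sum_ite_eq']
      split_ifs with h
      · rcases hf₄ i h with ⟨w, hw₁, hw₂⟩
        rwa [← hw₂, Nat.mul_div_cancel _ (hs i h)]
      · exact hc _ h
    · intro i hi
      rw [Multiset.mem_sum] at hi
      rcases hi with ⟨j, hj₁, hj₂⟩
      rwa [Multiset.eq_of_mem_replicate hj₂]
    · ext i
      simp_rw [Multiset.count_sum', Multiset.count_replicate, sum_ite_eq']
      simp only [ne_eq, Multiset.mem_toFinset, not_not, smul_eq_mul, ite_mul,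
        zero_mul, Finsupp.coe_mk]
      split_ifs with h
      · apply Nat.div_mul_cancel
        rcases hf₄ i h with ⟨w, _, hw₂⟩
        apply Dvd.intro_left _ hw₂
      · apply symm
        rw [← Finsupp.notMem_support_iff]
        exact notMem_mono hf'.2 h

lemma ind_coe [Semiring α] (s : Finset ℕ) : indicatorSeries α (↑s) = ∑ k ∈ s, (X : PowerSeries α) ^ k := by
  ext d
  simp [coeff_indicator, coeff_X_pow, Finset.sum_ite_eq]

/-- geometric-type partial sum -/
def Ps (t i : ℕ) : PowerSeries ℚ := ∑ m ∈ range t, (X : PowerSeries ℚ) ^ (m * i)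

def Qs (j r i : ℕ) : PowerSeries ℚ := ∑ m ∈ Ico j r, (X : PowerSeries ℚ) ^ (m * i)

lemma ind_lt (t i : ℕ) (hi : 0 < i) :
    indicatorSeries ℚ ((· * i) '' {m | m < t}) = Ps t i := by
  have h1 : (· * i) '' {m | m < t} = ↑((range t).image (· * i)) := by
    rw [Finset.coe_image, Finset.coe_range]
    rfl
  rw [h1, ind_coe, Finset.sum_image]
  · rfl
  · intro a _ b _ h
    exact Nat.eq_of_mul_eq_mul_right hi h

lemma ind_Ico (j r i : ℕ) (hi : 0 < i) :
    indicatorSeries ℚ ((· * i) '' {m | j ≤ m ∧ m < r}) = Qs j r i := by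
  have h1 : (· * i) '' {m | j ≤ m ∧ m < r} = ↑((Ico j r).image (· * i)) := by
    rw [Finset.coe_image, Finset.coe_Ico]
    rfl
  rw [h1, ind_coe, Finset.sum_image]
  · rfl
  · intro a _ b _ h
    exact Nat.eq_of_mul_eq_mul_right hi h

lemma one_sub_mul_Ps (t i : ℕ) :
    (1 - (X : PowerSeries ℚ) ^ i) * Ps t i = 1 - (X : PowerSeries ℚ) ^ (t * i) := by
  have h := geom_sum_mul ((X : PowerSeries ℚ) ^ i) t
  have h2 : Ps t i = ∑ m ∈ range t, ((X : PowerSeries ℚ) ^ i) ^ m := by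
    apply Finset.sum_congr rfl
    intro m _
    rw [mul_comm m i, pow_mul]
  rw [h2, mul_comm t i, pow_mul]
  linear_combination -h

lemma Qs_eq (j r i : ℕ) (hjr : j ≤ r) : Qs j r i = Ps r i - Ps j i := by
  rw [Qs, Ps, Ps, eq_sub_iff_add_eq, Finset.sum_Ico_eq_sub _ hjr]
  ring

lemma one_sub_mul_Qs (j r i : ℕ) (hjr : j ≤ r) :
    (1 - (X : PowerSeries ℚ) ^ i) * Qs j r i
      = (X : PowerSeries ℚ) ^ (j * i) - (X : PowerSeries ℚ) ^ (r * i) := by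
  rw [Qs_eq j r i hjr, mul_sub, one_sub_mul_Ps, one_sub_mul_Ps]
  ring

lemma const_one_sub (s : ℕ) (hs : 0 < s) :
    constantCoeff (R := ℚ) (1 - (X : PowerSeries ℚ) ^ s) = 1 := by
  simp [map_sub, map_pow, constantCoeff_X, zero_pow (Nat.pos_iff_ne_zero.mp hs)]

lemma inv_cancel (s : ℕ) (hs : 0 < s) :
    (1 - (X : PowerSeries ℚ) ^ s) * (1 - (X : PowerSeries ℚ) ^ s)⁻¹ = 1 := by
  apply PowerSeries.mul_inv_cancel
  rw [const_one_sub s hs]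
  exact one_ne_zero

lemma inv_cancel' (s : ℕ) (hs : 0 < s) :
    (1 - (X : PowerSeries ℚ) ^ s)⁻¹ * (1 - (X : PowerSeries ℚ) ^ s) = 1 := by
  rw [mul_comm]; exact inv_cancel s hs

lemma Ps_mul_frac (j r k : ℕ) (hk : 0 < k) (hjr : j ≤ r) (hr : 0 < r) :
    Ps r k * (((X : PowerSeries ℚ) ^ (j * k) - (X : PowerSeries ℚ) ^ (r * k)) *
      (1 - (X : PowerSeries ℚ) ^ (r * k))⁻¹) = Qs j r k := by
  have h5 := one_sub_mul_Qs j r k hjr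
  have h3 := one_sub_mul_Ps r k
  have h6 := inv_cancel (r * k) (Nat.mul_pos hr hk)
  calc Ps r k * (((X : PowerSeries ℚ) ^ (j * k) - (X : PowerSeries ℚ) ^ (r * k)) *
        (1 - (X : PowerSeries ℚ) ^ (r * k))⁻¹)
      = ((1 - (X : PowerSeries ℚ) ^ k) * Ps r k) * Qs j r k *
        (1 - (X : PowerSeries ℚ) ^ (r * k))⁻¹ := by rw [← h5]; ring
    _ = Qs j r k * ((1 - (X : PowerSeries ℚ) ^ (r * k)) *
        (1 - (X : PowerSeries ℚ) ^ (r * k))⁻¹) := by rw [h3]; ring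
    _ = Qs j r k := by rw [h6, mul_one]

lemma coeff_mul_eq_of_agree (n : ℕ) (A B C : PowerSeries ℚ)
    (h : ∀ d ≤ n, coeff (R := ℚ) d A = coeff (R := ℚ) d B) :
    coeff (R := ℚ) n (A * C) = coeff (R := ℚ) n (B * C) := by
  rw [coeff_mul, coeff_mul]
  apply Finset.sum_congr rfl
  intro p hp
  rw [Finset.HasAntidiagonal.mem_antidiagonal] at hp
  rw [h p.1 (by omega)]

lemma filter_dvd_eq_image (r n : ℕ) (hr : 0 < r) :
    (Icc 1 n).filter (fun i => r ∣ i) = (Icc 1 (n / r)).image (fun m => r * m) := by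
  ext i
  simp only [mem_filter, mem_Icc, mem_image]
  constructor
  · rintro ⟨⟨h1, h2⟩, m, rfl⟩
    refine ⟨m, ⟨?_, ?_⟩, rfl⟩
    · have hm : m ≠ 0 := by rintro rfl; simp at h1
      omega
    · rw [Nat.le_div_iff_mul_le hr, mul_comm]
      exact h2
  · rintro ⟨m, ⟨h1, h2⟩, rfl⟩
    rw [Nat.le_div_iff_mul_le hr] at h2
    refine ⟨⟨Nat.mul_pos hr h1, ?_⟩, ⟨m, rfl⟩⟩
    rw [mul_comm]
    exact h2

lemma mem_le_of_Icc {i n : ℕ} (h : i ∈ Icc 1 n) : 0 < i := (mem_Icc.mp h).1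

lemma constD_ne (n : ℕ) :
    constantCoeff (R := ℚ) (∏ i ∈ Icc 1 n, (1 - (X : PowerSeries ℚ) ^ i)) ≠ 0 := by
  rw [map_prod]
  rw [Finset.prod_eq_one]
  · exact one_ne_zero
  · intro i hi
    exact const_one_sub i (mem_le_of_Icc hi)

lemma dvd_prod_sub_one (n : ℕ) (s : Finset ℕ) (f : ℕ → PowerSeries ℚ)
    (hf : ∀ i ∈ s, (X : PowerSeries ℚ) ^ (n + 1) ∣ f i - 1) :
    (X : PowerSeries ℚ) ^ (n + 1) ∣ (∏ i ∈ s, f i) - 1 := by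
  apply Finset.prod_induction f (fun g => (X : PowerSeries ℚ) ^ (n + 1) ∣ g - 1)
  · intro a b ha hb
    have h : a * b - 1 = a * (b - 1) + (a - 1) := by ring
    rw [h]
    exact dvd_add (Dvd.dvd.mul_left hb a) ha
  · simp
  · exact hf

lemma phi_agree (r n : ℕ) (hr : 0 < r) :
    ∀ d ≤ n, coeff (R := ℚ) d (PhiTrunc r n) = coeff (R := ℚ) d (∏ i ∈ Icc 1 n, Ps r i) := by
  set D := ∏ i ∈ Icc 1 n, (1 - (X : PowerSeries ℚ) ^ i) with hD
  have hDne : D ≠ 0 := fun h => constD_ne n (by rw [← hD, h, map_zero])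
  have hBD : (∏ i ∈ Icc 1 n, Ps r i) * D = ∏ i ∈ Icc 1 n, (1 - (X : PowerSeries ℚ) ^ (r * i)) := by
    rw [hD, ← Finset.prod_mul_distrib]
    exact Finset.prod_congr rfl fun i _ => by rw [mul_comm, one_sub_mul_Ps]
  have hAD : PhiTrunc r n * D = ∏ m ∈ Icc 1 (n / r), (1 - (X : PowerSeries ℚ) ^ (r * m)) := by
    rw [PhiTrunc, hD, ← Finset.prod_mul_distrib]
    have hfac : ∀ i ∈ Icc 1 n,
        (if ¬ r ∣ i then (1 - (X : PowerSeries ℚ) ^ i)⁻¹ else 1) * (1 - (X : PowerSeries ℚ) ^ i)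
          = if r ∣ i then 1 - (X : PowerSeries ℚ) ^ i else 1 := by
      intro i hi
      by_cases h : r ∣ i
      · simp [h]
      · rw [if_neg h, if_pos (by exact h), inv_cancel' i (mem_le_of_Icc hi)]
    rw [Finset.prod_congr rfl hfac, ← Finset.prod_filter, filter_dvd_eq_image r n hr,
      Finset.prod_image]
    intro a _ b _ h
    exact Nat.eq_of_mul_eq_mul_left hr h
  have hsub : Icc 1 (n / r) ⊆ Icc 1 n := Finset.Icc_subset_Icc_right (Nat.div_le_self n r)
  set E := ∏ i ∈ Icc 1 n \ Icc 1 (n / r), (1 - (X : PowerSeries ℚ) ^ (r * i)) with hEdef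
  have hsplit : ∏ i ∈ Icc 1 n, (1 - (X : PowerSeries ℚ) ^ (r * i))
      = E * ∏ m ∈ Icc 1 (n / r), (1 - (X : PowerSeries ℚ) ^ (r * m)) :=
    (Finset.prod_sdiff hsub).symm
  have hE : (X : PowerSeries ℚ) ^ (n + 1) ∣ E - 1 := by
    apply dvd_prod_sub_one
    intro i hi
    rw [Finset.mem_sdiff, mem_Icc, mem_Icc] at hi
    have h1 : n / r < i := by omega
    have h2 : n < i * r := (Nat.div_lt_iff_lt_mul hr).mp h1
    have h3 : n + 1 ≤ r * i := by rw [mul_comm]; omega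
    have : (1 - (X : PowerSeries ℚ) ^ (r * i)) - 1 = -(X : PowerSeries ℚ) ^ (r * i) := by ring
    rw [this, dvd_neg]
    exact pow_dvd_pow _ h3
  have hBeq : ∏ i ∈ Icc 1 n, Ps r i = PhiTrunc r n * E := by
    apply mul_right_cancel₀ hDne
    rw [hBD, hsplit, ← hAD]
    ring
  intro d hd
  have hidentity : PhiTrunc r n * E = PhiTrunc r n + PhiTrunc r n * (E - 1) := by ring
  rw [hBeq, hidentity, map_add, left_eq_add]
  have hdvd : (X : PowerSeries ℚ) ^ (n + 1) ∣ PhiTrunc r n * (E - 1) :=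
    Dvd.dvd.mul_left hE _
  rw [PowerSeries.X_pow_dvd_iff] at hdvd
  exact hdvd d (by omega)

lemma parts_mem_Icc {n : ℕ} (p : n.Partition) {i : ℕ} (hi : i ∈ p.parts) : i ∈ Icc 1 n := by
  rw [mem_Icc]
  refine ⟨p.parts_pos hi, ?_⟩
  have := Multiset.single_le_sum (fun _ _ => Nat.zero_le _) _ hi
  rwa [p.parts_sum] at this

lemma card_eq_coeff (r j n k : ℕ) (hr : 0 < r) (hj : 0 < j) (hk : k ∈ Icc 1 n) :
    (((RP r n).filter (fun l => j ≤ l.parts.count k)).card : ℚ)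
      = coeff (R := ℚ) n (∏ i ∈ Icc 1 n,
          indicatorSeries ℚ ((· * i) ''
            (if i = k then {m | j ≤ m ∧ m < r} else {m | m < r}))) := by
  have hsets : (RP r n).filter (fun l => j ≤ l.parts.count k)
      = Finset.univ.filter (fun p : Nat.Partition n =>
          (∀ i, p.parts.count i ∈ (if i = k then {m | j ≤ m ∧ m < r} else {m | m < r})) ∧
          ∀ i ∈ p.parts, i ∈ Icc 1 n) := by
    rw [RP, Finset.filter_filter]
    apply Finset.filter_congr
    intro p _
    constructor
    · rintro ⟨h1, h2⟩
      refine ⟨fun i => ?_, fun i hi => parts_mem_Icc p hi⟩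
      by_cases h : i = k
      · subst h; rw [if_pos rfl]; exact ⟨h2, h1 i⟩
      · rw [if_neg h]; exact h1 i
    · rintro ⟨h1, h2⟩
      refine ⟨fun i => ?_, ?_⟩
      · have := h1 i
        by_cases h : i = k
        · subst h; rw [if_pos rfl] at this; exact this.2
        · rw [if_neg h] at this; exact this
      · have := h1 k
        rw [if_pos rfl] at this
        exact this.1
  rw [hsets]
  exact partialGF_prop ℚ n (Icc 1 n) (fun i hi => mem_le_of_Icc hi) _
    (fun i hi => by
      rw [if_neg (fun h : i = k => hi (h ▸ hk))]
      exact hr)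
end
end GenY

open GenY

/-- `Σ_n Y_{r,j,n} q^n = Φ_r(q) · Σ_{k ≥ 1} (q^{jk} - q^{rk})/(1-q^{rk})`, stated
coefficient-wise (the sum over `k` is truncated at `k ≤ n`, which does not change the `n`-th
coefficient). -/
theorem genFun_Y (r j : ℕ) (hr : 2 ≤ r) (hj : 1 ≤ j) (hjr : j ≤ r - 1) (n : ℕ) :
    PowerSeries.coeff (R := ℚ) n
      (PhiTrunc r n * ∑ k ∈ Finset.Icc 1 n,
        ((PowerSeries.X : PowerSeries ℚ) ^ (j * k) -
            (PowerSeries.X : PowerSeries ℚ) ^ (r * k)) *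
          (1 - (PowerSeries.X : PowerSeries ℚ) ^ (r * k))⁻¹) = Yrjn r j n := by
  have hr0 : 0 < r := by omega
  have hj0 : 0 < j := hj
  have hjr' : j ≤ r := by omega
  have hcard : ∀ l : n.Partition,
      (l.parts.toFinset.filter (fun i => j ≤ l.parts.count i)).card
        = ∑ k ∈ Icc 1 n, if j ≤ l.parts.count k then 1 else 0 := by
    intro l
    rw [Finset.card_filter]
    apply Finset.sum_subset
    · intro x hx
      exact parts_mem_Icc l (Multiset.mem_toFinset.mp hx)
    · intro x _ hx
      rw [if_neg]
      intro hc
      exact hx (Multiset.mem_toFinset.mpr (Multiset.count_pos.mp (by omega)))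
  have hY : Yrjn r j n
      = ∑ k ∈ Icc 1 n, ((RP r n).filter (fun l => j ≤ l.parts.count k)).card := by
    rw [Yrjn, Finset.sum_congr rfl (fun l _ => hcard l), Finset.sum_comm]
    exact Finset.sum_congr rfl fun k _ => (Finset.card_filter _ _).symm
  rw [coeff_mul_eq_of_agree n (PhiTrunc r n) (∏ i ∈ Icc 1 n, Ps r i) _
    (phi_agree r n hr0), mul_sum, map_sum, hY, Nat.cast_sum]
  apply Finset.sum_congr rfl
  intro k hk
  have hk1 : 0 < k := (mem_Icc.mp hk).1
  rw [card_eq_coeff r j n k hr0 hj0 hk]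
  congr 1
  calc (∏ i ∈ Icc 1 n, Ps r i) *
        (((X : PowerSeries ℚ) ^ (j * k) - (X : PowerSeries ℚ) ^ (r * k)) *
          (1 - (X : PowerSeries ℚ) ^ (r * k))⁻¹)
      = (Ps r k * (((X : PowerSeries ℚ) ^ (j * k) - (X : PowerSeries ℚ) ^ (r * k)) *
          (1 - (X : PowerSeries ℚ) ^ (r * k))⁻¹)) *
          ∏ i ∈ (Icc 1 n).erase k, Ps r i := by
        rw [← Finset.mul_prod_erase _ _ hk]; ring
    _ = Qs j r k * ∏ i ∈ (Icc 1 n).erase k, Ps r i := by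
        rw [Ps_mul_frac j r k hk1 hjr' hr0]
    _ = ∏ i ∈ Icc 1 n, indicatorSeries ℚ ((· * i) ''
          (if i = k then {m | j ≤ m ∧ m < r} else {m | m < r})) := by
        rw [← Finset.mul_prod_erase _
          (fun i => indicatorSeries ℚ ((· * i) ''
            (if i = k then {m | j ≤ m ∧ m < r} else {m | m < r}))) hk]
        congr 1
        · rw [if_pos rfl, ind_Ico j r k hk1]
        · exact Finset.prod_congr rfl fun i hi => by
            rw [if_neg (Finset.ne_of_mem_erase hi),
              ind_lt r i (mem_le_of_Icc (Finset.mem_of_mem_erase hi))]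
end

section
/- The Glaisher map g_r, which repeatedly replaces any part kr (a multiple of r) by r copies of k until no part is divisible by r, is a bijection from the set of r-regular partitions of n to the set of r-class regular partitions of n. -/
open Nat Finset
open scoped Classical

/-- The Glaisher map: iteratively replace each part `kr` by `r` copies of `k` until no part is
divisible by `r`.  Equivalently, a part `p = u·r^e` with `r ∤ u` becomes `r^e` copies of `u`,
where `e = padicValNat r p` is the exponent of `r` in `p`. -/
noncomputable def glaisher (r : ℕ) {n : ℕ} (l : n.Partition) : n.Partition where
  parts := l.parts.bind fun p =>
    Multiset.replicate (r ^ padicValNat r p) (p / r ^ padicValNat r p)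
  parts_pos := by
    intro i hi
    rw [Multiset.mem_bind] at hi
    obtain ⟨p, hp, hip⟩ := hi
    rw [Multiset.eq_of_mem_replicate hip]
    have hd : r ^ padicValNat r p ∣ p := pow_padicValNat_dvd
    have hppos : 0 < p := l.parts_pos hp
    have hpow : 0 < r ^ padicValNat r p := by
      rcases Nat.eq_zero_or_pos (r ^ padicValNat r p) with h | h
      · exfalso
        rw [h] at hd
        exact absurd (Nat.eq_zero_of_zero_dvd hd) (Nat.pos_iff_ne_zero.mp hppos)
      · exact h
    exact Nat.div_pos (Nat.le_of_dvd hppos hd) hpow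
  parts_sum := by
    rw [Multiset.sum_bind]
    have h : ∀ p ∈ l.parts,
        (Multiset.replicate (r ^ padicValNat r p) (p / r ^ padicValNat r p)).sum = p := by
      intro p hp
      rw [Multiset.sum_replicate, smul_eq_mul, Nat.mul_div_cancel' pow_padicValNat_dvd]
    rw [Multiset.map_congr rfl h, Multiset.map_id']
    exact l.parts_sum

section Aux2

variable {r : ℕ}

private lemma glaisher_lt_pow (hr : 2 ≤ r) (k : ℕ) : k < r ^ k :=
  lt_of_lt_of_le (Nat.lt_two_pow_self (n := k)) (Nat.pow_le_pow_left hr k)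

private lemma glaisher_ne_zero {u : ℕ} (hu : ¬ r ∣ u) : u ≠ 0 := by
  rintro rfl; exact hu (dvd_zero r)

private lemma glaisher_maxPowDiv_eq_zero {u : ℕ} (hu : ¬ r ∣ u) : r.maxPowDiv u = 0 := by
  by_contra h
  exact hu (dvd_trans (dvd_pow_self r h) (pow_padicValNat_dvd (p := r) (n := u)))

private lemma glaisher_pv_mul_pow (hr : 2 ≤ r) {u : ℕ} (hu : ¬ r ∣ u) (k : ℕ) :
    padicValNat r (u * r ^ k) = k := by
  rw [mul_comm,
    Nat.maxPowDiv.base_pow_mul (by omega) (glaisher_ne_zero hu),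
    show padicValNat r u = 0 from glaisher_maxPowDiv_eq_zero hu, zero_add]

private lemma glaisher_div_mul (r p : ℕ) :
    p / r ^ padicValNat r p * r ^ padicValNat r p = p :=
  Nat.div_mul_cancel pow_padicValNat_dvd

private lemma glaisher_not_dvd_div (hr : 2 ≤ r) {p : ℕ} (hp : p ≠ 0) :
    ¬ r ∣ p / r ^ padicValNat r p := by
  rintro ⟨c, hc⟩
  have h1 : r ^ (padicValNat r p + 1) ∣ p := by
    refine ⟨c, ?_⟩
    calc p = p / r ^ padicValNat r p * r ^ padicValNat r p := (glaisher_div_mul r p).symm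
    _ = r ^ (padicValNat r p + 1) * c := by rw [hc]; ring
  have h2 := (Nat.pow_dvd_iff_le_padicValNat (show r ≠ 1 by omega) hp).mp h1
  omega

private lemma glaisher_digit_sum (hr : 2 ≤ r) (K m : ℕ) :
    ∑ k ∈ Finset.range K, r ^ k * (m / r ^ k % r) = m % r ^ K := by
  induction K with
  | zero => simp [Nat.mod_one]
  | succ K ih =>
      rw [Finset.sum_range_succ, ih, pow_succ, Nat.mod_mul]

private lemma glaisher_digits_unique (hr : 2 ≤ r) :
    ∀ (K : ℕ) (a b : ℕ → ℕ), (∀ k, a k < r) → (∀ k, b k < r) →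
    (∑ k ∈ Finset.range K, r ^ k * a k) = (∑ k ∈ Finset.range K, r ^ k * b k) →
    ∀ k < K, a k = b k := by
  intro K
  induction K with
  | zero => intro a b _ _ _ k hk; omega
  | succ K ih =>
      intro a b ha hb hsum k hk
      have hre : ∀ (c : ℕ → ℕ), ∑ k ∈ Finset.range (K+1), r ^ k * c k
          = r * (∑ k ∈ Finset.range K, r ^ k * c (k+1)) + c 0 := by
        intro c
        rw [Finset.sum_range_succ', pow_zero, one_mul, Finset.mul_sum]
        congr 1
        apply Finset.sum_congr rfl
        intro i _
        ring
      rw [hre a, hre b] at hsum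
      have h0 : a 0 = b 0 := by
        have := congrArg (· % r) hsum
        simpa [Nat.mul_add_mod, Nat.mod_eq_of_lt (ha 0), Nat.mod_eq_of_lt (hb 0)] using this
      have hAB : (∑ k ∈ Finset.range K, r ^ k * a (k+1))
          = ∑ k ∈ Finset.range K, r ^ k * b (k+1) := by
        have hr0 : 0 < r := by omega
        have : r * (∑ k ∈ Finset.range K, r ^ k * a (k+1))
            = r * (∑ k ∈ Finset.range K, r ^ k * b (k+1)) := by omega
        exact Nat.eq_of_mul_eq_mul_left hr0 this
      rcases k with _ | j
      · exact h0
      · exact ih (fun i => a (i+1)) (fun i => b (i+1)) (fun i => ha (i+1)) (fun i => hb (i+1))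
          hAB j (by omega)

private lemma glaisher_count_bind (hr : 2 ≤ r) {u : ℕ} (hu : ¬ r ∣ u) (N : ℕ)
    (s : Multiset ℕ) (hs : ∀ p ∈ s, 0 < p ∧ p ≤ N) :
    Multiset.count u
        (s.bind fun p => Multiset.replicate (r ^ padicValNat r p) (p / r ^ padicValNat r p))
      = ∑ k ∈ Finset.range (N + 1), r ^ k * Multiset.count (u * r ^ k) s := by
  induction s using Multiset.induction with
  | empty => simp
  | cons p s ih =>
      have hps := hs p (Multiset.mem_cons_self p s)
      have hs' : ∀ q ∈ s, 0 < q ∧ q ≤ N := fun q hq => hs q (Multiset.mem_cons_of_mem hq)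
      have hA : Multiset.count u
            (Multiset.replicate (r ^ padicValNat r p) (p / r ^ padicValNat r p))
          = ∑ k ∈ Finset.range (N + 1), r ^ k * if u * r ^ k = p then 1 else 0 := by
        rw [Multiset.count_replicate]
        by_cases hq : p / r ^ padicValNat r p = u
        · rw [if_pos hq]
          set k0 := padicValNat r p with hk0
          have hpu : u * r ^ k0 = p := by rw [← hq, glaisher_div_mul]
          have hk0N : k0 ∈ Finset.range (N + 1) := by
            have h1 : r ^ k0 ≤ p := by
              calc r ^ k0 ≤ u * r ^ k0 :=
                Nat.le_mul_of_pos_left _ (Nat.pos_of_ne_zero (glaisher_ne_zero hu))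
              _ = p := hpu
            have h2 := glaisher_lt_pow hr k0
            have := hps.2
            simp only [Finset.mem_range]; omega
          have hcond : ∀ k, (u * r ^ k = p) ↔ k = k0 := by
            intro k
            constructor
            · intro h
              have hv := glaisher_pv_mul_pow hr hu k
              rw [h] at hv
              omega
            · rintro rfl; exact hpu
          calc r ^ k0 = ∑ k ∈ Finset.range (N + 1), if k = k0 then r ^ k else 0 := by
                rw [Finset.sum_ite_eq' (Finset.range (N + 1)) k0 (fun k => r ^ k), if_pos hk0N]
          _ = ∑ k ∈ Finset.range (N + 1), r ^ k * if u * r ^ k = p then 1 else 0 := by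
                apply Finset.sum_congr rfl
                intro k _
                simp only [hcond]
                by_cases h : k = k0 <;> simp [h]
        · rw [if_neg hq]
          symm
          apply Finset.sum_eq_zero
          intro k _
          have hne : ¬ (u * r ^ k = p) := by
            intro h
            apply hq
            have hv : padicValNat r p = k := by rw [← h, glaisher_pv_mul_pow hr hu]
            rw [hv, ← h, Nat.mul_div_cancel _ (pow_pos (show 0 < r by omega) k)]
          simp [hne]
      rw [Multiset.cons_bind, Multiset.count_add, ih hs', hA]
      simp only [Multiset.count_cons, Nat.mul_add, Finset.sum_add_distrib]
      omega


private lemma glaisher_sum_finset_sum {α : Type*} (s : Finset α) (f : α → Multiset ℕ) :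
    (∑ u ∈ s, f u).sum = ∑ u ∈ s, (f u).sum := by
  classical
  induction s using Finset.induction_on with
  | empty => simp
  | insert _ _ h ih => rw [Finset.sum_insert h, Finset.sum_insert h, Multiset.sum_add, ih]

private lemma glaisher_part_bounds {n : ℕ} (l : n.Partition) : ∀ p ∈ l.parts, 0 < p ∧ p ≤ n :=
  fun p hp => ⟨l.parts_pos hp, by
    have := Multiset.le_sum_of_mem hp
    rwa [l.parts_sum] at this⟩

private lemma glaisher_count_eq_zero {n : ℕ} (l : n.Partition) {i : ℕ} (h : i = 0 ∨ n < i) :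
    Multiset.count i l.parts = 0 := by
  rw [Multiset.count_eq_zero]
  intro hi
  have := glaisher_part_bounds l i hi
  omega

private lemma glaisher_mem_RP_iff {r n : ℕ} {l : n.Partition} :
    l ∈ RP r n ↔ ∀ i, l.parts.count i < r := by simp [RP]

private lemma glaisher_mem_CP_iff {r n : ℕ} {l : n.Partition} :
    l ∈ CP r n ↔ ∀ p ∈ l.parts, ¬ r ∣ p := by simp [CP]

private lemma glaisher_count (hr : 2 ≤ r) {n : ℕ} (l : n.Partition) {u : ℕ} (hu : ¬ r ∣ u) :
    Multiset.count u (glaisher r l).parts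
      = ∑ k ∈ Finset.range (n + 1), r ^ k * Multiset.count (u * r ^ k) l.parts :=
  glaisher_count_bind hr hu n l.parts (glaisher_part_bounds l)

end Aux2

/-- The Glaisher map is a bijection from the `r`-regular partitions of `n` onto the
`r`-class regular partitions of `n`. -/
theorem glaisher_bijOn (r n : ℕ) (hr : 2 ≤ r) :
    Set.BijOn (glaisher r) (RP r n : Set n.Partition) (CP r n : Set n.Partition) := by
  have hmaps : ∀ l : n.Partition, glaisher r l ∈ CP r n := by
    intro l
    rw [glaisher_mem_CP_iff]
    intro p hp
    have hp' : p ∈ l.parts.bind fun q =>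
        Multiset.replicate (r ^ padicValNat r q) (q / r ^ padicValNat r q) := hp
    rw [Multiset.mem_bind] at hp'
    obtain ⟨q, hq, hpq⟩ := hp'
    rw [Multiset.eq_of_mem_replicate hpq]
    exact glaisher_not_dvd_div hr (l.parts_pos hq).ne'
  refine ⟨fun l _ => hmaps l, ?_, ?_⟩
  · -- InjOn
    intro l hl l' hl' h
    rw [Finset.mem_coe, glaisher_mem_RP_iff] at hl hl'
    ext i
    rcases Nat.eq_zero_or_pos i with rfl | hi
    · rw [glaisher_count_eq_zero l (Or.inl rfl), glaisher_count_eq_zero l' (Or.inl rfl)]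
    · set k := padicValNat r i with hk
      set u := i / r ^ padicValNat r i with huu
      have hu : ¬ r ∣ u := glaisher_not_dvd_div hr hi.ne'
      have hiu : u * r ^ k = i := glaisher_div_mul r i
      by_cases hkn : k ≤ n
      · have hsum : (∑ j ∈ Finset.range (n + 1), r ^ j * Multiset.count (u * r ^ j) l.parts)
            = ∑ j ∈ Finset.range (n + 1), r ^ j * Multiset.count (u * r ^ j) l'.parts := by
          rw [← glaisher_count hr l hu, ← glaisher_count hr l' hu, h]
        have := glaisher_digits_unique hr (n + 1)
          (fun j => Multiset.count (u * r ^ j) l.parts)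
          (fun j => Multiset.count (u * r ^ j) l'.parts)
          (fun j => hl _) (fun j => hl' _) hsum k (by omega)
        simpa only [hiu] using this
      · have hin : n < i := by
          have h1 := glaisher_lt_pow hr k
          have h2 : r ^ k ≤ u * r ^ k :=
            Nat.le_mul_of_pos_left _ (Nat.pos_of_ne_zero (glaisher_ne_zero hu))
          omega
        rw [glaisher_count_eq_zero l (Or.inr hin), glaisher_count_eq_zero l' (Or.inr hin)]
  · -- SurjOn
    intro μ hμ
    rw [Finset.mem_coe, glaisher_mem_CP_iff] at hμ
    classical
    set L : Multiset ℕ := ∑ u ∈ μ.parts.toFinset, ∑ k ∈ Finset.range (n + 1),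
        Multiset.replicate (Multiset.count u μ.parts / r ^ k % r) (u * r ^ k) with hL
    have hcn : ∀ u, Multiset.count u μ.parts ≤ n := by
      intro u
      by_cases hin : u ∈ μ.parts
      · have hrep : Multiset.replicate (Multiset.count u μ.parts) u ≤ μ.parts :=
          Multiset.le_count_iff_replicate_le.mp le_rfl
        obtain ⟨t, ht⟩ := Multiset.le_iff_exists_add.mp hrep
        have hsum : Multiset.count u μ.parts * u + t.sum = n := by
          have h5 := congrArg Multiset.sum ht
          rw [Multiset.sum_add, Multiset.sum_replicate, smul_eq_mul, μ.parts_sum] at h5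
          omega
        have hu1 : 1 ≤ u := μ.parts_pos hin
        have h3 := Nat.le_mul_of_pos_right (Multiset.count u μ.parts) hu1
        omega
      · have : Multiset.count u μ.parts = 0 := Multiset.count_eq_zero.mpr hin
        omega
    have hclt : ∀ u, Multiset.count u μ.parts < r ^ (n + 1) := by
      intro u
      have h1 := hcn u
      have h3 : (2 : ℕ) ^ (n + 1) ≤ r ^ (n + 1) := Nat.pow_le_pow_left hr (n + 1)
      have h4 := Nat.lt_two_pow_self (n := n + 1)
      omega
    have hcountL : ∀ u k, ¬ r ∣ u → k ≤ n →
        Multiset.count (u * r ^ k) L = Multiset.count u μ.parts / r ^ k % r := by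
      intro u k hu hk
      rw [hL, Multiset.count_sum']
      have hterm : ∀ u' ∈ μ.parts.toFinset,
          Multiset.count (u * r ^ k) (∑ k' ∈ Finset.range (n + 1),
            Multiset.replicate (Multiset.count u' μ.parts / r ^ k' % r) (u' * r ^ k'))
          = if u' = u then Multiset.count u μ.parts / r ^ k % r else 0 := by
        intro u' hu'
        have hu'r : ¬ r ∣ u' := hμ u' (Multiset.mem_toFinset.mp hu')
        rw [Multiset.count_sum']
        by_cases heq : u' = u
        · subst heq
          have hterm2 : ∀ k' ∈ Finset.range (n + 1),
              Multiset.count (u' * r ^ k)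
                (Multiset.replicate (Multiset.count u' μ.parts / r ^ k' % r) (u' * r ^ k'))
              = if k' = k then Multiset.count u' μ.parts / r ^ k % r else 0 := by
            intro k' _
            rw [Multiset.count_replicate]
            by_cases hkk : k' = k
            · subst hkk; simp
            · rw [if_neg, if_neg hkk]
              intro hcontr
              apply hkk
              have hv := congrArg (padicValNat r) hcontr
              rwa [glaisher_pv_mul_pow hr hu'r, glaisher_pv_mul_pow hr hu'r] at hv
          rw [Finset.sum_congr rfl hterm2,
            Finset.sum_ite_eq' (Finset.range (n + 1)) k
              (fun _ => Multiset.count u' μ.parts / r ^ k % r),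
            if_pos (Finset.mem_range.mpr (by omega)), if_pos rfl]
        · rw [if_neg heq]
          apply Finset.sum_eq_zero
          intro k' _
          rw [Multiset.count_replicate, if_neg]
          intro hcontr
          apply heq
          have hv := congrArg (padicValNat r) hcontr
          rw [glaisher_pv_mul_pow hr hu'r, glaisher_pv_mul_pow hr hu] at hv
          rw [hv] at hcontr
          exact Nat.eq_of_mul_eq_mul_right (pow_pos (show 0 < r by omega) k) hcontr
      rw [Finset.sum_congr rfl hterm,
        Finset.sum_ite_eq' μ.parts.toFinset u (fun _ => Multiset.count u μ.parts / r ^ k % r)]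
      by_cases hmem : u ∈ μ.parts.toFinset
      · rw [if_pos hmem]
      · rw [if_neg hmem]
        have hz : Multiset.count u μ.parts = 0 :=
          Multiset.count_eq_zero.mpr (fun hc => hmem (Multiset.mem_toFinset.mpr hc))
        rw [hz]
        simp
    have hmemL : ∀ i ∈ L, ∃ u ∈ μ.parts.toFinset, ∃ k, k ≤ n ∧ i = u * r ^ k := by
      intro i hi
      rw [hL, Multiset.mem_sum] at hi
      obtain ⟨u, hu, hi⟩ := hi
      rw [Multiset.mem_sum] at hi
      obtain ⟨k, hk, hi⟩ := hi
      exact ⟨u, hu, k, Nat.lt_succ_iff.mp (Finset.mem_range.mp hk),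
        Multiset.eq_of_mem_replicate hi⟩
    have hsumL : L.sum = n := by
      rw [hL, glaisher_sum_finset_sum]
      have hst : ∀ u ∈ μ.parts.toFinset,
          (∑ k ∈ Finset.range (n + 1),
            Multiset.replicate (Multiset.count u μ.parts / r ^ k % r) (u * r ^ k)).sum
          = Multiset.count u μ.parts • u := by
        intro u _
        rw [glaisher_sum_finset_sum]
        have hst2 : ∀ k ∈ Finset.range (n + 1),
            (Multiset.replicate (Multiset.count u μ.parts / r ^ k % r) (u * r ^ k)).sum
            = u * (r ^ k * (Multiset.count u μ.parts / r ^ k % r)) := by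
          intro k _
          rw [Multiset.sum_replicate, smul_eq_mul]
          ring
        rw [Finset.sum_congr rfl hst2, ← Finset.mul_sum, glaisher_digit_sum hr,
          Nat.mod_eq_of_lt (hclt u), smul_eq_mul, mul_comm]
      rw [Finset.sum_congr rfl hst, ← Finset.sum_multiset_count, μ.parts_sum]
    have hLreg : ∀ i, Multiset.count i L < r := by
      intro i
      by_cases hi : i ∈ L
      · obtain ⟨u, hu, k, hk, rfl⟩ := hmemL i hi
        rw [hcountL u k (hμ u (Multiset.mem_toFinset.mp hu)) hk]
        exact Nat.mod_lt _ (by omega)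
      · rw [Multiset.count_eq_zero.mpr hi]
        omega
    have hpos : ∀ {i : ℕ}, i ∈ L → 0 < i := by
      intro i hi
      obtain ⟨u, hu, k, hk, rfl⟩ := hmemL i hi
      exact Nat.mul_pos (μ.parts_pos (Multiset.mem_toFinset.mp hu))
        (pow_pos (show 0 < r by omega) k)
    set l : n.Partition := ⟨L, hpos, hsumL⟩ with hldef
    have heq : glaisher r l = μ := by
      ext i
      by_cases hi0 : i = 0
      · subst hi0
        rw [glaisher_count_eq_zero (glaisher r l) (Or.inl rfl),
          glaisher_count_eq_zero μ (Or.inl rfl)]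
      · by_cases hdi : r ∣ i
        · have h1 : Multiset.count i (glaisher r l).parts = 0 := by
            rw [Multiset.count_eq_zero]
            intro hmem
            exact (glaisher_mem_CP_iff.mp (hmaps l)) i hmem hdi
          have h2 : Multiset.count i μ.parts = 0 := by
            rw [Multiset.count_eq_zero]
            intro hmem
            exact hμ i hmem hdi
          rw [h1, h2]
        · rw [glaisher_count hr l hdi]
          have hterm : ∀ k ∈ Finset.range (n + 1), r ^ k * Multiset.count (i * r ^ k) l.parts
              = r ^ k * (Multiset.count i μ.parts / r ^ k % r) := by
            intro k hk
            rw [show l.parts = L from rfl,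
              hcountL i k hdi (Nat.lt_succ_iff.mp (Finset.mem_range.mp hk))]
          rw [Finset.sum_congr rfl hterm, glaisher_digit_sum hr,
            Nat.mod_eq_of_lt (hclt i)]
    exact ⟨l, by rw [Finset.mem_coe, glaisher_mem_RP_iff]; exact hLreg, heq⟩
end
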